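/- arXiv:2604.09404 — 10 statements merged into one kernel-verified Lean document; each statement's English description precedes it below -/
import Mathlib

section
/- The category C is a ℂ-linear abelian category: it admits a ℂ-linear structure on its Hom-groups (with the imaginary unit i acting on Hom_C((V₁,ι₁),(V₂,ι₂)) by φ ↦ ι₂∘φ), its zero object is E(0_R), and for any two objects (V₁,ι₁), (V₂,ι₂) of C the pair (V₁ ⊕ V₂, ι₁ ⊕ ι₂) is a biproduct of (V₁,ι₁) and (V₂,ι₂) in C. -/
set_option linter.unusedSectionVars false

open CategoryTheory CategoryTheory.Limits

universe v u

variable (R : Type u) [Category.{v} R] [Abelian R] [CategoryTheory.Linear ℝ R]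

/-- Objects of the category `C`: pairs `(V, ι)` with `ι ∘ ι = -1`. -/
structure CObj : Type max u v where
  V : R
  ι : V ⟶ V
  hι : ι ≫ ι = -𝟙 V

variable {R}

instance : Category.{v} (CObj R) where
  Hom W₁ W₂ := { φ : W₁.V ⟶ W₂.V // W₁.ι ≫ φ = φ ≫ W₂.ι }
  id W := ⟨𝟙 W.V, by simp⟩
  comp f g := ⟨f.1 ≫ g.1, by
    rw [← Category.assoc, f.2, Category.assoc, g.2, Category.assoc]⟩
  id_comp f := Subtype.ext (Category.id_comp f.1)
  comp_id f := Subtype.ext (Category.comp_id f.1)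
  assoc f g h := Subtype.ext (Category.assoc f.1 g.1 h.1)

@[ext]
lemma CObj.hom_ext {W₁ W₂ : CObj R} {f g : W₁ ⟶ W₂} (h : f.1 = g.1) : f = g :=
  Subtype.ext h

@[simp]
lemma CObj.id_coe (W : CObj R) : (𝟙 W : W ⟶ W).1 = 𝟙 W.V := rfl

@[simp]
lemma CObj.comp_coe {W₁ W₂ W₃ : CObj R} (f : W₁ ⟶ W₂) (g : W₂ ⟶ W₃) :
    (f ≫ g).1 = f.1 ≫ g.1 := rfl

instance (W₁ W₂ : CObj R) : Zero (W₁ ⟶ W₂) := ⟨⟨0, by simp⟩⟩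

instance (W₁ W₂ : CObj R) : Add (W₁ ⟶ W₂) :=
  ⟨fun f g => ⟨f.1 + g.1, by rw [Preadditive.comp_add, Preadditive.add_comp, f.2, g.2]⟩⟩

instance (W₁ W₂ : CObj R) : Neg (W₁ ⟶ W₂) :=
  ⟨fun f => ⟨-f.1, by rw [Preadditive.comp_neg, Preadditive.neg_comp, f.2]⟩⟩

instance (W₁ W₂ : CObj R) : Sub (W₁ ⟶ W₂) :=
  ⟨fun f g => ⟨f.1 - g.1, by rw [Preadditive.comp_sub, Preadditive.sub_comp, f.2, g.2]⟩⟩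

instance (W₁ W₂ : CObj R) : SMul ℕ (W₁ ⟶ W₂) :=
  ⟨fun n f => ⟨n • f.1, by rw [Linear.comp_smul, Linear.smul_comp, f.2]⟩⟩

instance (W₁ W₂ : CObj R) : SMul ℤ (W₁ ⟶ W₂) :=
  ⟨fun n f => ⟨n • f.1, by rw [Linear.comp_smul, Linear.smul_comp, f.2]⟩⟩

@[simp] lemma CObj.zero_coe (W₁ W₂ : CObj R) : (0 : W₁ ⟶ W₂).1 = 0 := rfl
@[simp] lemma CObj.add_coe {W₁ W₂ : CObj R} (f g : W₁ ⟶ W₂) : (f + g).1 = f.1 + g.1 := rfl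
@[simp] lemma CObj.neg_coe {W₁ W₂ : CObj R} (f : W₁ ⟶ W₂) : (-f).1 = -f.1 := rfl

instance (W₁ W₂ : CObj R) : AddCommGroup (W₁ ⟶ W₂) :=
  Function.Injective.addCommGroup (fun f : W₁ ⟶ W₂ => f.1) Subtype.val_injective
    rfl (fun _ _ => rfl) (fun _ => rfl) (fun _ _ => rfl) (fun _ _ => rfl) (fun _ _ => rfl)

instance : Preadditive (CObj R) where
  add_comp P Q S f f' g := by apply Subtype.ext; exact Preadditive.add_comp _ _ _ f.1 f'.1 g.1
  comp_add P Q S f g g' := by apply Subtype.ext; exact Preadditive.comp_add _ _ _ f.1 g.1 g'.1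

variable (R)

/-- The conjugation functor `B : C → C`. -/
def Bfunctor : CObj R ⥤ CObj R where
  obj W := ⟨W.V, -W.ι, by simp [W.hι]⟩
  map f := ⟨f.1, by simp [f.2]⟩
  map_id _ := rfl
  map_comp _ _ := rfl

/-- The forgetful functor `F : C → R`. -/
def Ffunctor : CObj R ⥤ R where
  obj W := W.V
  map f := f.1
  map_id _ := rfl
  map_comp _ _ := rfl

/-- The complexification functor `E : R → C`. -/
noncomputable def Efunctor : R ⥤ CObj R where
  obj V :=
    { V := V ⊞ V
      ι := -(biprod.snd ≫ biprod.inl) + biprod.fst ≫ biprod.inr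
      hι := by ext <;> simp }
  map φ := ⟨biprod.map φ φ, by ext <;> simp⟩
  map_id V := Subtype.ext (by ext <;> simp)
  map_comp f g := Subtype.ext (by ext <;> simp)

variable {R}

/-- The biproduct `(V₁ ⊕ V₂, ι₁ ⊕ ι₂)` of two objects of `C`. -/
noncomputable def csum (W₁ W₂ : CObj R) : CObj R where
  V := W₁.V ⊞ W₂.V
  ι := biprod.map W₁.ι W₂.ι
  hι := by ext <;> simp [W₁.hι, W₂.hι]

/-- Multiplication by `i` as a morphism in `C`. -/
def iMor (W : CObj R) : W ⟶ W := ⟨W.ι, rfl⟩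

open scoped TensorProduct Quaternion

variable [EssentiallySmall.{v} R]

theorem statement0
    (hfin : ∀ V : R, Simple V → FiniteDimensional ℝ (V ⟶ V)) :
    -- (1) `i` acts on `Hom_C(W₁, W₂)` by `φ ↦ ι₂ ∘ φ`: this is again a `C`-morphism…
    (∀ (W₁ W₂ : CObj R) (φ : W₁ ⟶ W₂), W₁.ι ≫ (φ.1 ≫ W₂.ι) = (φ.1 ≫ W₂.ι) ≫ W₂.ι) ∧
    -- …this action squares to `-1`…
    (∀ (W₁ W₂ : CObj R) (φ : W₁ ⟶ W₂), (φ.1 ≫ W₂.ι) ≫ W₂.ι = -φ.1) ∧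
    -- …it is additive and `ℝ`-linear (hence gives a `ℂ`-module structure on Hom-groups)…
    (∀ (W₁ W₂ : CObj R) (φ ψ : W₁ ⟶ W₂), (φ.1 + ψ.1) ≫ W₂.ι = φ.1 ≫ W₂.ι + ψ.1 ≫ W₂.ι) ∧
    (∀ (W₁ W₂ : CObj R) (r : ℝ) (φ : W₁ ⟶ W₂), (r • φ.1) ≫ W₂.ι = r • (φ.1 ≫ W₂.ι)) ∧
    -- …and composition is `ℂ`-bilinear for it (so `C` is a `ℂ`-linear category)…
    (∀ (W₁ W₂ W₃ : CObj R) (f : W₁ ⟶ W₂) (g : W₂ ⟶ W₃),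
        (f.1 ≫ W₂.ι) ≫ g.1 = (f.1 ≫ g.1) ≫ W₃.ι) ∧
    -- the zero object of `C` is `E(0_R)`…
    (∀ Z : R, IsZero Z → IsZero ((Efunctor R).obj Z)) ∧
    -- …and `(V₁ ⊞ V₂, ι₁ ⊕ ι₂)` is a biproduct of `(V₁, ι₁)` and `(V₂, ι₂)` in `C`.
    (∀ W₁ W₂ : CObj R, ∃ b : BinaryBicone W₁ W₂, b.pt = csum W₁ W₂ ∧ Nonempty b.IsBilimit) := by
  refine ⟨fun W₁ W₂ φ => by rw [← Category.assoc, φ.2],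
    fun W₁ W₂ φ => by rw [Category.assoc, W₂.hι, Preadditive.comp_neg, Category.comp_id],
    fun _ _ φ ψ => Preadditive.add_comp _ _ _ _ _ _,
    fun _ _ r φ => Linear.smul_comp _ _ _ _ _ _,
    fun W₁ W₂ W₃ f g => by rw [Category.assoc, Category.assoc, g.2],
    fun Z hZ => ?_, fun W₁ W₂ => ?_⟩
  · rw [IsZero.iff_id_eq_zero]
    apply Subtype.ext
    have h : IsZero (Z ⊞ Z) := by
      rw [IsZero.iff_id_eq_zero]
      rw [← biprod.total, hZ.eq_of_tgt biprod.fst 0, hZ.eq_of_tgt biprod.snd 0]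
      simp
    exact h.eq_of_tgt _ _
  · refine ⟨{
      pt := csum W₁ W₂
      fst := ⟨biprod.fst, by simp [csum]⟩
      snd := ⟨biprod.snd, by simp [csum]⟩
      inl := ⟨biprod.inl, by simp [csum]⟩
      inr := ⟨biprod.inr, by simp [csum]⟩
      inl_fst := Subtype.ext (by exact biprod.inl_fst)
      inl_snd := Subtype.ext (by exact biprod.inl_snd)
      inr_fst := Subtype.ext (by exact biprod.inr_fst)
      inr_snd := Subtype.ext (by exact biprod.inr_snd) }, rfl,
      ⟨isBinaryBilimitOfTotal _ (Subtype.ext biprod.total)⟩⟩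
end

section
/- There is a natural isomorphism of functors E ∘ F ≅ Id_C ⊕ B, where Id_C ⊕ B denotes the functor C → C sending an object W to the biproduct W ⊕ B(W) and a morphism φ to φ ⊕ B(φ). Explicitly, for W = (V, ι) the isomorphism is given by the morphisms ε̃₁ := ε₁ - ε₂∘ι : W → E(F(W)) and ε̃₂ := ε₁ + ε₂∘ι : B(W) → E(F(W)), with inverse components π̃₁ := (1/2)(π₁ + ι∘π₂) and π̃₂ := (1/2)(π₁ - ι∘π₂). -/
set_option linter.unusedSectionVars false

open CategoryTheory CategoryTheory.Limits

universe v u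

variable (R : Type u) [Category.{v} R] [Abelian R] [CategoryTheory.Linear ℝ R]

variable {R}

variable (R)

variable {R}

variable (R)

/-- The functor `Id_C ⊕ B : C → C`. -/
noncomputable def idPlusB : CObj R ⥤ CObj R where
  obj W := csum W ((Bfunctor R).obj W)
  map {X Y} f := ⟨biprod.map f.1 f.1, by
    show biprod.map X.ι (-X.ι) ≫ biprod.map f.1 f.1 = biprod.map f.1 f.1 ≫ biprod.map Y.ι (-Y.ι)
    ext <;> simp [f.2]⟩
  map_id W := Subtype.ext (by
    show biprod.map (𝟙 W.V) (𝟙 W.V) = 𝟙 (W.V ⊞ W.V)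
    ext <;> simp)
  map_comp f g := Subtype.ext (by
    show biprod.map (f.1 ≫ g.1) (f.1 ≫ g.1) = biprod.map f.1 f.1 ≫ biprod.map g.1 g.1
    ext <;> simp)



noncomputable def homApp (W : CObj R) :
    (Ffunctor R ⋙ Efunctor R).obj W ⟶ (idPlusB R).obj W :=
  ⟨biprod.lift (((1 : ℝ)/2) • (biprod.fst + biprod.snd ≫ W.ι))
      (((1 : ℝ)/2) • (biprod.fst - biprod.snd ≫ W.ι)), by
    dsimp only [Ffunctor, Efunctor, idPlusB, csum, Bfunctor, Functor.comp_obj]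
    have h : (-(biprod.snd ≫ biprod.inl) + biprod.fst ≫ biprod.inr : W.V ⊞ W.V ⟶ W.V ⊞ W.V) ≫ biprod.lift (((1 : ℝ)/2) • (biprod.fst + biprod.snd ≫ W.ι)) (((1 : ℝ)/2) • (biprod.fst - biprod.snd ≫ W.ι)) =
        biprod.lift (((1 : ℝ)/2) • (biprod.fst + biprod.snd ≫ W.ι)) (((1 : ℝ)/2) • (biprod.fst - biprod.snd ≫ W.ι)) ≫ biprod.map W.ι (-W.ι) := by
      ext <;> simp [W.hι]
    exact h⟩

noncomputable def invApp (W : CObj R) :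
    (idPlusB R).obj W ⟶ (Ffunctor R ⋙ Efunctor R).obj W :=
  ⟨biprod.desc (biprod.inl - W.ι ≫ biprod.inr) (biprod.inl + W.ι ≫ biprod.inr), by
    dsimp only [Ffunctor, Efunctor, idPlusB, csum, Bfunctor, Functor.comp_obj]
    have h : (biprod.map W.ι (-W.ι) : W.V ⊞ W.V ⟶ W.V ⊞ W.V) ≫ biprod.desc (biprod.inl - W.ι ≫ biprod.inr) (biprod.inl + W.ι ≫ biprod.inr) =
        biprod.desc (biprod.inl - W.ι ≫ biprod.inr) (biprod.inl + W.ι ≫ biprod.inr) ≫ (-(biprod.snd ≫ biprod.inl) + biprod.fst ≫ biprod.inr : W.V ⊞ W.V ⟶ W.V ⊞ W.V) := by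
      ext <;> simp [W.hι]
    exact h⟩

open scoped TensorProduct Quaternion

variable [EssentiallySmall.{v} R]

theorem statement2
    (hfin : ∀ V : R, Simple V → FiniteDimensional ℝ (V ⟶ V)) :
    ∃ η : (Ffunctor R ⋙ Efunctor R) ≅ idPlusB R,
      ∀ W : CObj R,
        (η.hom.app W).1 =
          biprod.lift (((1 : ℝ)/2) • (biprod.fst + biprod.snd ≫ W.ι))
            (((1 : ℝ)/2) • (biprod.fst - biprod.snd ≫ W.ι)) ∧
        (η.inv.app W).1 =
          biprod.desc (biprod.inl - W.ι ≫ biprod.inr) (biprod.inl + W.ι ≫ biprod.inr) := by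
  refine ⟨{ hom := { app := homApp R, naturality := ?_ }
            inv := { app := invApp R, naturality := ?_ }
            hom_inv_id := ?_
            inv_hom_id := ?_ }, fun W => ⟨rfl, rfl⟩⟩
  · intro W₁ W₂ f
    apply Subtype.ext
    dsimp only [homApp, Ffunctor, Efunctor, idPlusB, csum, Bfunctor, Functor.comp_obj,
      Functor.comp_map, CObj.comp_coe]
    have h : biprod.map f.1 f.1 ≫ biprod.lift (((1 : ℝ)/2) • (biprod.fst + biprod.snd ≫ W₂.ι)) (((1 : ℝ)/2) • (biprod.fst - biprod.snd ≫ W₂.ι)) = biprod.lift (((1 : ℝ)/2) • (biprod.fst + biprod.snd ≫ W₁.ι)) (((1 : ℝ)/2) • (biprod.fst - biprod.snd ≫ W₁.ι)) ≫ biprod.map f.1 f.1 := by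
      ext <;> simp [f.2]
    exact h
  · intro W₁ W₂ f
    apply Subtype.ext
    dsimp only [invApp, Ffunctor, Efunctor, idPlusB, csum, Bfunctor, Functor.comp_obj,
      Functor.comp_map, CObj.comp_coe]
    have h : biprod.map f.1 f.1 ≫ biprod.desc (biprod.inl - W₂.ι ≫ biprod.inr) (biprod.inl + W₂.ι ≫ biprod.inr) = biprod.desc (biprod.inl - W₁.ι ≫ biprod.inr) (biprod.inl + W₁.ι ≫ biprod.inr) ≫ biprod.map f.1 f.1 := by
      ext <;> simp [f.2]
    exact h
  · ext W
    dsimp only [homApp, invApp, Ffunctor, Efunctor, idPlusB, csum, Bfunctor, Functor.comp_obj,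
      NatTrans.comp_app, CObj.comp_coe, NatTrans.id_app, CObj.id_coe]
    have h : biprod.lift (((1 : ℝ)/2) • (biprod.fst + biprod.snd ≫ W.ι)) (((1 : ℝ)/2) • (biprod.fst - biprod.snd ≫ W.ι)) ≫ biprod.desc (biprod.inl - W.ι ≫ biprod.inr) (biprod.inl + W.ι ≫ biprod.inr) = 𝟙 (W.V ⊞ W.V) := by
      ext <;> simp [W.hι] <;> module
    exact h
  · ext W
    dsimp only [homApp, invApp, Ffunctor, Efunctor, idPlusB, csum, Bfunctor, Functor.comp_obj,
      NatTrans.comp_app, CObj.comp_coe, NatTrans.id_app, CObj.id_coe]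
    have h : biprod.desc (biprod.inl - W.ι ≫ biprod.inr) (biprod.inl + W.ι ≫ biprod.inr) ≫ biprod.lift (((1 : ℝ)/2) • (biprod.fst + biprod.snd ≫ W.ι)) (((1 : ℝ)/2) • (biprod.fst - biprod.snd ≫ W.ι)) = 𝟙 (W.V ⊞ W.V) := by
      ext <;> simp [W.hι] <;> module
    exact h
end

section
/- Let V be a simple object of R. Then either E(V) is a simple object of C, or there exists a simple object W of C such that E(V) ≅ W ⊕ B(W) in C and F(W) ≅ V in R. -/
set_option linter.unusedSectionVars false

open CategoryTheory CategoryTheory.Limits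

universe v u

variable (R : Type u) [Category.{v} R] [Abelian R] [CategoryTheory.Linear ℝ R]

variable {R}

variable (R)

variable {R}

open scoped TensorProduct Quaternion

variable [EssentiallySmall.{v} R]

@[simp] lemma CObj.comp_hι {W : CObj R} {Z : R} (g : Z ⟶ W.V) :
    g ≫ W.ι ≫ W.ι = -g := by
  rw [W.hι, Preadditive.comp_neg, Category.comp_id]

lemma CObj.mono_val {W₁ W₂ : CObj R} (f : W₁ ⟶ W₂) [Mono f] : Mono f.1 := by
  constructor
  intro Z g h w
  have cond : ∀ g : Z ⟶ W₁.V,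
      ((Efunctor R).obj Z).ι ≫ biprod.desc g (g ≫ W₁.ι)
        = biprod.desc g (g ≫ W₁.ι) ≫ W₁.ι := by
    intro g
    show (-(biprod.snd ≫ biprod.inl) + biprod.fst ≫ biprod.inr) ≫ _ = _
    dsimp only [Efunctor]
    apply biprod.hom_ext' <;> simp
  let G : (Efunctor R).obj Z ⟶ W₁ := ⟨biprod.desc g (g ≫ W₁.ι), cond g⟩
  let H : (Efunctor R).obj Z ⟶ W₁ := ⟨biprod.desc h (h ≫ W₁.ι), cond h⟩
  have hGH : G ≫ f = H ≫ f := by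
    apply CObj.hom_ext
    show biprod.desc g (g ≫ W₁.ι) ≫ f.1 = biprod.desc h (h ≫ W₁.ι) ≫ f.1
    apply biprod.hom_ext' <;> simp [w, f.2, reassoc_of% w]
  have hGHe : G = H := (cancel_mono f).1 hGH
  have hv : biprod.desc g (g ≫ W₁.ι) = biprod.desc h (h ≫ W₁.ι) :=
    congrArg Subtype.val hGHe
  calc g = biprod.inl ≫ biprod.desc g (g ≫ W₁.ι) := by simp
    _ = biprod.inl ≫ biprod.desc h (h ≫ W₁.ι) := by rw [hv]
    _ = h := by simp

lemma CObj.isIso_val {W₁ W₂ : CObj R} (f : W₁ ⟶ W₂) (h : IsIso f.1) : IsIso f := by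
  haveI := h
  refine ⟨⟨⟨inv f.1, ?_⟩, ?_, ?_⟩⟩
  · rw [← cancel_mono f.1]
    simp [f.2]
  · apply CObj.hom_ext; simp
  · apply CObj.hom_ext; simp

lemma CObj.simple_of_simple_val {W : CObj R} (h : Simple W.V) : Simple W := by
  haveI := h
  constructor
  intro Y f hm
  constructor
  · intro hiso hf0
    apply id_nonzero W.V
    have h1 : 𝟙 W = 0 := by
      have h2 := congrArg (fun g => inv f ≫ g) hf0
      simpa using h2
    exact congrArg Subtype.val h1
  · intro hf0
    haveI : Mono f.1 := CObj.mono_val f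
    have h1 : f.1 ≠ 0 := fun h0 => hf0 (CObj.hom_ext h0)
    exact CObj.isIso_val f (isIso_of_mono_of_nonzero h1)

@[simp] lemma half_smul_add {X Y : R} (u : X ⟶ Y) : (1/2 : ℝ) • (u + u) = u := by
  rw [← two_smul ℝ u, smul_smul]
  norm_num

@[simp] lemma half_smul_add' {X Y : R} (u : X ⟶ Y) :
    (2⁻¹ : ℝ) • u + (2⁻¹ : ℝ) • u = u := by
  rw [← smul_add, ← two_smul ℝ u, smul_smul]
  norm_num

theorem statement4
    (hfin : ∀ V : R, Simple V → FiniteDimensional ℝ (V ⟶ V)) (V : R) [Simple V] :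
    Simple ((Efunctor R).obj V) ∨
      ∃ W : CObj R, Simple W ∧
        Nonempty ((Efunctor R).obj V ≅ csum W ((Bfunctor R).obj W)) ∧
        Nonempty ((Ffunctor R).obj W ≅ V) := by
  by_cases hJ : ∃ j : V ⟶ V, j ≫ j = -𝟙 V
  · obtain ⟨J, hJ2⟩ := hJ
    set W : CObj R := ⟨V, J, hJ2⟩ with hW
    refine Or.inr ⟨W, CObj.simple_of_simple_val ‹Simple V›, ⟨?_⟩, ⟨Iso.refl V⟩⟩
    have hf : (csum W ((Bfunctor R).obj W)).ι ≫
        (biprod.desc (biprod.lift (𝟙 V) (-J)) (biprod.lift (𝟙 V) J) : V ⊞ V ⟶ V ⊞ V)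
        = biprod.desc (biprod.lift (𝟙 V) (-J)) (biprod.lift (𝟙 V) J) ≫
          ((Efunctor R).obj V).ι := by
      show biprod.map J (-J) ≫ _ = _ ≫ (-(biprod.snd ≫ biprod.inl) + biprod.fst ≫ biprod.inr)
      apply biprod.hom_ext' <;> apply biprod.hom_ext <;> simp [hJ2, biprod.lift_desc]
    have hg : ((Efunctor R).obj V).ι ≫
        ((1/2 : ℝ) • biprod.desc (biprod.lift (𝟙 V) (𝟙 V)) (biprod.lift J (-J)) :
          V ⊞ V ⟶ V ⊞ V)
        = ((1/2 : ℝ) • biprod.desc (biprod.lift (𝟙 V) (𝟙 V)) (biprod.lift J (-J)))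
          ≫ (csum W ((Bfunctor R).obj W)).ι := by
      show (-(biprod.snd ≫ biprod.inl) + biprod.fst ≫ biprod.inr) ≫ _ = _ ≫ biprod.map J (-J)
      dsimp only [Efunctor]
      apply biprod.hom_ext' <;> apply biprod.hom_ext <;> simp [hJ2, biprod.lift_desc]
    refine ⟨⟨(1/2 : ℝ) • biprod.desc (biprod.lift (𝟙 V) (𝟙 V)) (biprod.lift J (-J)), hg⟩,
      ⟨biprod.desc (biprod.lift (𝟙 V) (-J)) (biprod.lift (𝟙 V) J), hf⟩, ?_, ?_⟩
    · apply CObj.hom_ext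
      show ((1/2 : ℝ) • biprod.desc (biprod.lift (𝟙 V) (𝟙 V)) (biprod.lift J (-J))) ≫
        biprod.desc (biprod.lift (𝟙 V) (-J)) (biprod.lift (𝟙 V) J) = 𝟙 (V ⊞ V)
      apply biprod.hom_ext' <;> apply biprod.hom_ext <;> simp [hJ2, biprod.lift_desc]
    · apply CObj.hom_ext
      show biprod.desc (biprod.lift (𝟙 V) (-J)) (biprod.lift (𝟙 V) J) ≫
        ((1/2 : ℝ) • biprod.desc (biprod.lift (𝟙 V) (𝟙 V)) (biprod.lift J (-J))) = 𝟙 (V ⊞ V)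
      apply biprod.hom_ext' <;> apply biprod.hom_ext <;> simp [hJ2, biprod.lift_desc]
  · left
    constructor
    intro Y f hm
    constructor
    · intro hiso hf0
      apply id_nonzero V
      have h1 : 𝟙 ((Efunctor R).obj V) = 0 := by
        have h2 := congrArg (fun g => inv f ≫ g) hf0
        simpa using h2
      have h2 : 𝟙 (V ⊞ V) = 0 := congrArg Subtype.val h1
      calc 𝟙 V = biprod.inl ≫ 𝟙 (V ⊞ V) ≫ biprod.fst := by simp
        _ = 0 := by rw [h2]; simp
    · intro hf0
      dsimp only [Efunctor] at f ⊢
      haveI : Mono f := hm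
      haveI hm1 : Mono f.1 := CObj.mono_val f
      set a : Y.V ⟶ V := f.1 ≫ biprod.fst with ha
      set b : Y.V ⟶ V := f.1 ≫ biprod.snd with hb
      have hf2 : Y.ι ≫ f.1 = f.1 ≫ (-(biprod.snd ≫ biprod.inl) + biprod.fst ≫ biprod.inr) :=
        f.2
      have hrel1 : Y.ι ≫ a = -b := by
        rw [ha, ← Category.assoc, hf2]
        simp [hb]
      have hflift : (f.1 : Y.V ⟶ V ⊞ V) = biprod.lift a b := by
        apply biprod.hom_ext <;> simp [ha, hb]
      set k : kernel a ⟶ Y.V := kernel.ι a with hk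
      haveI hmk : Mono k := by rw [hk]; infer_instance
      have hkey : k ≫ f.1 = (k ≫ b) ≫ (biprod.inr : V ⟶ V ⊞ V) := by
        rw [hflift]
        apply biprod.hom_ext <;> simp [hk, kernel.condition]
      haveI hmkb : Mono (k ≫ b) := by
        haveI : Mono ((k ≫ b) ≫ (biprod.inr : V ⟶ V ⊞ V)) := by
          rw [← hkey]; exact mono_comp _ _
        exact mono_of_mono (k ≫ b) (biprod.inr : V ⟶ V ⊞ V)
      by_cases hb0 : k ≫ b = 0
      · -- a is mono, leading to a square root of -1, contradiction
        exfalso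
        have hk0 : k = 0 := by
          have : k ≫ f.1 = 0 ≫ f.1 := by rw [hkey, hb0]; simp
          exact (cancel_mono f.1).1 this
        haveI hma : Mono a := Preadditive.mono_of_kernel_zero hk0
        have ha0 : a ≠ 0 := by
          intro h0
          apply hf0
          apply CObj.hom_ext
          have hbz : b = 0 := by
            rw [← neg_neg b, ← hrel1, h0, Limits.comp_zero, neg_zero]
          rw [hflift, h0, hbz]
          apply biprod.hom_ext <;> simp <;> exact Limits.zero_comp.symm
        haveI : IsIso a := isIso_of_mono_of_nonzero ha0
        refine hJ ⟨inv a ≫ Y.ι ≫ a, ?_⟩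
        have : (inv a ≫ Y.ι ≫ a) ≫ (inv a ≫ Y.ι ≫ a) = inv a ≫ (Y.ι ≫ Y.ι) ≫ a := by
          simp
        rw [this, Y.hι]
        simp
      · haveI : IsIso (k ≫ b) := isIso_of_mono_of_nonzero hb0
        set t : V ⟶ Y.V := inv (k ≫ b) ≫ k with htdef
        have ht : t ≫ f.1 = (biprod.inr : V ⟶ V ⊞ V) := by
          rw [htdef, Category.assoc, hkey, IsIso.inv_hom_id_assoc]
        have ht2 : (-(t ≫ Y.ι)) ≫ f.1 = (biprod.inl : V ⟶ V ⊞ V) := by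
          rw [Preadditive.neg_comp, Category.assoc, hf2, ← Category.assoc, ht]
          simp
        have hretr : (biprod.fst ≫ (-(t ≫ Y.ι)) + biprod.snd ≫ t) ≫ f.1 = 𝟙 (V ⊞ V) := by
          have e1 : ((biprod.fst : V ⊞ V ⟶ V) ≫ (-(t ≫ Y.ι))) ≫ f.1
              = (biprod.fst : V ⊞ V ⟶ V) ≫ ((-(t ≫ Y.ι)) ≫ f.1) := Category.assoc _ _ _
          have e2 : ((biprod.snd : V ⊞ V ⟶ V) ≫ t) ≫ f.1
              = (biprod.snd : V ⊞ V ⟶ V) ≫ (t ≫ f.1) := Category.assoc _ _ _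
          rw [Preadditive.add_comp, e1, e2, ht, ht2, biprod.total]
        haveI : Epi (f.1 : Y.V ⟶ V ⊞ V) := by
          have he : Epi ((biprod.fst ≫ (-(t ≫ Y.ι)) + biprod.snd ≫ t) ≫ f.1) := by
            rw [hretr]; infer_instance
          exact epi_of_epi (biprod.fst ≫ (-(t ≫ Y.ι)) + biprod.snd ≫ t) f.1
        haveI : IsIso (f.1 : Y.V ⟶ V ⊞ V) := isIso_of_mono_of_epi _
        exact CObj.isIso_val f this
end

section
/- Let W be a simple object of C. Then either F(W) is a simple object of R, or there exists a simple object V of R such that F(W) ≅ V ⊕ V in R, E(V) ≅ W in C, and W ≅ B(W) in C. -/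
set_option linter.unusedSectionVars false

open CategoryTheory CategoryTheory.Limits

universe v u

variable (R : Type u) [Category.{v} R] [Abelian R] [CategoryTheory.Linear ℝ R]

variable {R}

variable (R)

variable {R}

open scoped TensorProduct Quaternion

lemma comp_iota_iota {V : R} (W : CObj R) (f : V ⟶ W.V) : f ≫ (W.ι ≫ W.ι) = -f := by
  rw [W.hι]; simp

lemma psi_comm (W : CObj R) {V : R} (f : V ⟶ W.V) :
    (-(biprod.snd ≫ biprod.inl) + biprod.fst ≫ biprod.inr : V ⊞ V ⟶ V ⊞ V) ≫
      biprod.desc f (f ≫ W.ι) = biprod.desc f (f ≫ W.ι) ≫ W.ι := by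
  ext
  · simp
  · simpa using (comp_iota_iota W f).symm

lemma psi_epi (W : CObj R) [Simple W] {V : R} (f : V ⟶ W.V) (hf : f ≠ 0) :
    Epi (biprod.desc f (f ≫ W.ι)) := by
  set ψ := biprod.desc f (f ≫ W.ι) with hψdef
  have hcomm := psi_comm W f
  have hψ0 : ψ ≠ 0 := by
    intro h
    apply hf
    have := biprod.inl ≫= h
    simpa [hψdef] using this
  have h1 : ψ ≫ (W.ι ≫ cokernel.π ψ) = 0 := by
    rw [← Category.assoc, ← hcomm, Category.assoc, cokernel.condition, comp_zero]
  have h0 : (Abelian.image.ι ψ ≫ W.ι) ≫ cokernel.π ψ = 0 := by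
    rw [Category.assoc]
    exact Abelian.image_ι_comp_eq_zero h1
  let ιI : Abelian.image ψ ⟶ Abelian.image ψ :=
    kernel.lift (cokernel.π ψ) (Abelian.image.ι ψ ≫ W.ι) h0
  have hlift : ιI ≫ Abelian.image.ι ψ = Abelian.image.ι ψ ≫ W.ι :=
    kernel.lift_ι _ _ _
  have hιI2 : ιI ≫ ιI = -𝟙 (Abelian.image ψ) := by
    rw [← cancel_mono (Abelian.image.ι ψ), Category.assoc, hlift, ← Category.assoc, hlift,
      Category.assoc, comp_iota_iota]
    simp
  let WI : CObj R := ⟨Abelian.image ψ, ιI, hιI2⟩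
  let μ : WI ⟶ W := ⟨Abelian.image.ι ψ, hlift⟩
  haveI hμmono : Mono μ := by
    constructor
    intro Z a b h
    apply CObj.hom_ext
    have h' : a.1 ≫ Abelian.image.ι ψ = b.1 ≫ Abelian.image.ι ψ := congrArg Subtype.val h
    exact (cancel_mono (Abelian.image.ι ψ)).1 h'
  have hμ0 : μ ≠ 0 := by
    intro h
    have h' : Abelian.image.ι ψ = 0 := congrArg Subtype.val h
    apply hψ0
    rw [← Abelian.image.fac ψ, h', comp_zero]
  haveI : IsIso μ := isIso_of_mono_of_nonzero hμ0
  haveI : IsIso ((Ffunctor R).map μ) := inferInstance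
  haveI hι : IsIso (Abelian.image.ι ψ) := this
  rw [← Abelian.image.fac ψ]
  exact epi_comp _ _

lemma psi_isIso (W : CObj R) [Simple W] {V : R} (f : V ⟶ W.V) [Mono f] (hf : f ≠ 0)
    (hni : ¬ IsIso f) : IsIso (biprod.desc f (f ≫ W.ι)) := by
  set ψ := biprod.desc f (f ≫ W.ι) with hψdef
  haveI : Epi ψ := psi_epi W f hf
  suffices h : Mono ψ by exact isIso_of_mono_of_epi ψ
  apply Abelian.mono_of_kernel_ι_eq_zero
  set k := kernel.ι ψ with hkdef
  set p := k ≫ biprod.fst with hpdef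
  set q := k ≫ biprod.snd with hqdef
  have hdesc : (biprod.fst ≫ f + biprod.snd ≫ (f ≫ W.ι) : V ⊞ V ⟶ W.V) = ψ := by
    apply biprod.hom_ext' <;> simp [hψdef]
  have hpq : p ≫ f + q ≫ (f ≫ W.ι) = 0 := by
    rw [hpdef, hqdef, Category.assoc, Category.assoc, ← Preadditive.comp_add, hdesc, hkdef,
      kernel.condition]
  have hpf : p ≫ f = -(q ≫ (f ≫ W.ι)) := by
    rw [eq_neg_iff_add_eq_zero]; exact hpq
  have hm' : (p ≫ f) ≫ W.ι = q ≫ f := by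
    rw [hpf]
    have : (q ≫ (f ≫ W.ι)) ≫ W.ι = q ≫ (f ≫ (W.ι ≫ W.ι)) := by simp
    rw [Preadditive.neg_comp, this, comp_iota_iota]
    simp
  have hm : p ≫ f = 0 := by
    by_contra hm0
    haveI hE := psi_epi W (p ≫ f) hm0
    have heq : biprod.desc (p ≫ f) ((p ≫ f) ≫ W.ι) = biprod.desc p q ≫ f := by
      apply biprod.hom_ext' <;> simp [hm']
    rw [heq] at hE
    haveI : Epi (biprod.desc p q ≫ f) := hE
    haveI : Epi f := epi_of_epi (biprod.desc p q) f
    exact hni (isIso_of_mono_of_epi f)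
  have hp : p = 0 := by
    rw [← cancel_mono f, hm]; simp
  have hq : q = 0 := by
    rw [← cancel_mono f, ← hm', hm]; simp
  apply biprod.hom_ext
  · simpa [hpdef] using hp
  · simpa [hqdef] using hq

variable [EssentiallySmall.{v} R]

theorem statement5
    (hfin : ∀ V : R, Simple V → FiniteDimensional ℝ (V ⟶ V)) (W : CObj R) [Simple W] :
    Simple ((Ffunctor R).obj W) ∨
      ∃ V : R, Simple V ∧
        Nonempty ((Ffunctor R).obj W ≅ V ⊞ V) ∧
        Nonempty ((Efunctor R).obj V ≅ W) ∧
        Nonempty (W ≅ (Bfunctor R).obj W) := by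
  by_cases hsimp : Simple ((Ffunctor R).obj W)
  · exact Or.inl hsimp
  right
  have hid : (𝟙 W.V : W.V ⟶ W.V) ≠ 0 := by
    intro h
    have h' : (𝟙 W : W ⟶ W) = 0 := CObj.hom_ext (by simpa using h)
    exact id_nonzero W h'
  -- extract a nonzero, non-iso mono into W.V
  have hex : ∃ (V : R) (f : V ⟶ W.V), Mono f ∧ f ≠ 0 ∧ ¬ IsIso f := by
    by_contra hcon
    push_neg at hcon
    apply hsimp
    constructor
    intro Y f hmono
    constructor
    · intro hiso h0
      have h1 : 𝟙 ((Ffunctor R).obj W) = 0 := by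
        rw [← IsIso.inv_hom_id f]; simp [h0]
      exact hid h1
    · intro hne
      exact hcon Y f hmono hne
  obtain ⟨V, f, hmono, hne, hni⟩ := hex
  haveI := hmono
  set ψ := biprod.desc f (f ≫ W.ι) with hψdef
  haveI hiso : IsIso ψ := psi_isIso W f hne hni
  have hcomm := psi_comm W f
  -- the isomorphism E(V) ≅ W in C
  have hcomm' : ((Efunctor R).obj V).ι ≫ ψ = ψ ≫ W.ι := hcomm
  have hinv : W.ι ≫ inv ψ =
      inv ψ ≫ (-(biprod.snd ≫ biprod.inl) + biprod.fst ≫ biprod.inr : V ⊞ V ⟶ V ⊞ V) := by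
    rw [← hψdef] at hcomm
    rw [← cancel_epi ψ, ← Category.assoc, ← hcomm, Category.assoc, IsIso.hom_inv_id,
      Category.comp_id, ← Category.assoc, IsIso.hom_inv_id, Category.id_comp]
  let eEW : (Efunctor R).obj V ≅ W :=
    { hom := ⟨ψ, hcomm'⟩
      inv := ⟨(inv ψ : W.V ⟶ V ⊞ V), hinv⟩
      hom_inv_id := CObj.hom_ext (by exact IsIso.hom_inv_id ψ)
      inv_hom_id := CObj.hom_ext (by exact IsIso.inv_hom_id ψ) }
  refine ⟨V, ?_, ⟨(asIso ψ).symm⟩, ⟨eEW⟩, ?_⟩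
  · -- V is simple
    constructor
    intro V' g hg
    haveI := hg
    constructor
    · intro hgiso h0
      have hV : 𝟙 V = 0 := by rw [← IsIso.inv_hom_id g]; simp [h0]
      apply hne
      rw [← Category.id_comp f, hV, zero_comp]
    · intro hg0
      have hgf : g ≫ f ≠ 0 := by
        intro h
        apply hg0
        have : g ≫ f = 0 ≫ f := by simpa using h
        exact (cancel_mono f).1 this
      haveI hE := psi_epi W (g ≫ f) hgf
      have heq : biprod.desc (g ≫ f) ((g ≫ f) ≫ W.ι) = biprod.map g g ≫ ψ := by
        apply biprod.hom_ext' <;> simp [hψdef]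
      rw [heq] at hE
      haveI : Epi (biprod.map g g ≫ ψ) := hE
      haveI hmap : Epi (biprod.map g g) := by
        have h2 : biprod.map g g = (biprod.map g g ≫ ψ) ≫ inv ψ := by simp
        rw [h2]
        exact epi_comp _ _
      haveI : Epi (biprod.map g g ≫ biprod.snd) := epi_comp _ _
      haveI : Epi ((biprod.snd : V' ⊞ V' ⟶ V') ≫ g) := by
        rwa [← biprod.map_snd]
      haveI : Epi g := epi_of_epi (biprod.snd : V' ⊞ V' ⟶ V') g
      exact isIso_of_mono_of_epi g
  · -- W ≅ B W
    have hswap : ((Efunctor R).obj V).ι ≫ biprod.desc biprod.inr biprod.inl =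
        biprod.desc biprod.inr biprod.inl ≫ ((Bfunctor R).obj ((Efunctor R).obj V)).ι := by
      show (-(biprod.snd ≫ biprod.inl) + biprod.fst ≫ biprod.inr : V ⊞ V ⟶ V ⊞ V) ≫ _ =
        _ ≫ (-(-(biprod.snd ≫ biprod.inl) + biprod.fst ≫ biprod.inr) : V ⊞ V ⟶ V ⊞ V)
      ext <;> simp
    let s : (Efunctor R).obj V ≅ (Bfunctor R).obj ((Efunctor R).obj V) :=
      { hom := ⟨biprod.desc biprod.inr biprod.inl, hswap⟩
        inv := ⟨biprod.desc biprod.inr biprod.inl, by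
          show ((-(-(biprod.snd ≫ biprod.inl) + biprod.fst ≫ biprod.inr)) : V ⊞ V ⟶ V ⊞ V) ≫
              biprod.desc biprod.inr biprod.inl =
            biprod.desc biprod.inr biprod.inl ≫
              ((-(biprod.snd ≫ biprod.inl) + biprod.fst ≫ biprod.inr) : V ⊞ V ⟶ V ⊞ V)
          ext <;> simp⟩
        hom_inv_id := CObj.hom_ext (by apply biprod.hom_ext' <;> simp [Efunctor, Bfunctor])
        inv_hom_id := CObj.hom_ext (by apply biprod.hom_ext' <;> simp [Efunctor, Bfunctor]) }
    exact ⟨eEW.symm ≪≫ s ≪≫ (Bfunctor R).mapIso eEW⟩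
end

section
/- For every object V of R, the map sending f ∈ End_C(E(V)) to f₁₁ ⊗ 1 + f₁₂ ⊗ i, where f_{ij} := π_j∘f∘ε_i ∈ End_R(V), is an isomorphism of ℂ-algebras End_C(E(V)) ≅ End_R(V) ⊗_ℝ ℂ. -/
set_option linter.unusedSectionVars false

open CategoryTheory CategoryTheory.Limits

universe v u

variable (R : Type u) [Category.{v} R] [Abelian R] [CategoryTheory.Linear ℝ R]

variable {R}

variable (R)

variable {R}

open scoped TensorProduct Quaternion

section Statement6Aux

instance (W₁ W₂ : CObj R) : Module ℝ (W₁ ⟶ W₂) where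
  smul r f := ⟨r • f.1, by rw [Linear.comp_smul, Linear.smul_comp, f.2]⟩
  one_smul f := Subtype.ext (one_smul ℝ f.1)
  mul_smul r s f := Subtype.ext (mul_smul r s f.1)
  smul_zero r := Subtype.ext (smul_zero r)
  smul_add r f g := Subtype.ext (smul_add r f.1 g.1)
  add_smul r s f := Subtype.ext (add_smul r s f.1)
  zero_smul f := Subtype.ext (zero_smul ℝ f.1)

@[simp] lemma CObj.rsmul_coe {W₁ W₂ : CObj R} (r : ℝ) (f : W₁ ⟶ W₂) :
    (r • f).1 = r • f.1 := rfl

lemma CObj.smul_comp {W₁ W₂ W₃ : CObj R} (r : ℝ) (f : W₁ ⟶ W₂) (g : W₂ ⟶ W₃) :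
    (r • f) ≫ g = r • (f ≫ g) :=
  Subtype.ext (Linear.smul_comp _ _ _ _ _ _)

variable (V : R)

lemma EV_iota : ((Efunctor R).obj V).ι
    = -(biprod.snd ≫ biprod.inl) + biprod.fst ≫ biprod.inr := rfl

@[simp] lemma Emap_coe (x : V ⟶ V) : ((Efunctor R).map x).1 = biprod.map x x := rfl

@[simp] lemma iMor_coe (W : CObj R) : (iMor W).1 = W.ι := rfl

lemma inl_iota : biprod.inl ≫ ((Efunctor R).obj V).ι = biprod.inr := by
  change biprod.inl ≫ (-(biprod.snd ≫ biprod.inl) + biprod.fst ≫ biprod.inr : V ⊞ V ⟶ V ⊞ V) = _; simp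

lemma inr_iota : biprod.inr ≫ ((Efunctor R).obj V).ι = -biprod.inl := by
  change biprod.inr ≫ (-(biprod.snd ≫ biprod.inl) + biprod.fst ≫ biprod.inr : V ⊞ V ⟶ V ⊞ V) = _; simp

lemma iota_fst : ((Efunctor R).obj V).ι ≫ biprod.fst = -biprod.snd := by
  change (-(biprod.snd ≫ biprod.inl) + biprod.fst ≫ biprod.inr : V ⊞ V ⟶ V ⊞ V) ≫ biprod.fst = _; simp

lemma iota_snd : ((Efunctor R).obj V).ι ≫ biprod.snd = biprod.fst := by
  change (-(biprod.snd ≫ biprod.inl) + biprod.fst ≫ biprod.inr : V ⊞ V ⟶ V ⊞ V) ≫ biprod.snd = _; simp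

lemma bmap_add (x y : V ⟶ V) :
    biprod.map (x + y) (x + y) = biprod.map x x + biprod.map y y := by
  apply biprod.hom_ext <;> apply biprod.hom_ext' <;> simp

lemma bmap_smul (r : ℝ) (x : V ⟶ V) :
    biprod.map (r • x) (r • x) = r • biprod.map x x := by
  apply biprod.hom_ext <;> apply biprod.hom_ext' <;> simp

lemma bmap_smul' (r : ℝ) (x : CategoryTheory.End V) :
    biprod.map (r • x) (r • x) = r • biprod.map x x := bmap_smul V r x

lemma Emap_add (x y : V ⟶ V) :
    (Efunctor R).map (x + y) = (Efunctor R).map x + (Efunctor R).map y :=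
  Subtype.ext (bmap_add V x y)

lemma Emap_smul (r : ℝ) (x : V ⟶ V) :
    (Efunctor R).map (r • x) = r • (Efunctor R).map x :=
  Subtype.ext (bmap_smul V r x)

set_option maxRecDepth 8000 in
set_option maxHeartbeats 1600000 in
set_option synthInstance.maxHeartbeats 400000 in
noncomputable def s6bil :
    CategoryTheory.End V →ₗ[ℝ] ℂ →ₗ[ℝ] ((Efunctor R).obj V ⟶ (Efunctor R).obj V) :=
  LinearMap.mk₂ ℝ
    (fun x z => z.re • (Efunctor R).map x
      + z.im • ((Efunctor R).map x ≫ iMor ((Efunctor R).obj V)))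
    (fun x y z => by
      rw [Emap_add, Preadditive.add_comp, smul_add, smul_add]; abel)
    (fun r x z => by
      apply Subtype.ext
      simp only [CObj.add_coe, CObj.rsmul_coe, CObj.comp_coe, Emap_coe, iMor_coe,
        bmap_smul', Linear.smul_comp, smul_smul, smul_add, mul_comm]
      have key : ∀ M J : V ⊞ V ⟶ V ⊞ V, z.re • r • M + z.im • (r • M) ≫ J
          = (r * z.re) • M + (r * z.im) • M ≫ J := fun M J => by
        rw [Linear.smul_comp, smul_smul, smul_smul, mul_comm z.re, mul_comm z.im]
      exact key _ _)
    (fun x z w => by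
      simp only [Complex.add_re, Complex.add_im, add_smul]; abel)
    (fun r z x => by
      apply Subtype.ext
      simp only [CObj.add_coe, CObj.rsmul_coe, CObj.comp_coe, Emap_coe, iMor_coe,
        Complex.real_smul, Complex.mul_re, Complex.mul_im, Complex.ofReal_re,
        Complex.ofReal_im, zero_mul, sub_zero, zero_add, add_zero, smul_add,
        smul_smul])

noncomputable def s6f (f : CategoryTheory.End ((Efunctor R).obj V)) :
    (CategoryTheory.End V) ⊗[ℝ] ℂ :=
  ((biprod.inl ≫ f.1 ≫ biprod.fst : CategoryTheory.End V) ⊗ₜ[ℝ] (1 : ℂ)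
      : CategoryTheory.End V ⊗[ℝ] ℂ)
    + ((biprod.inl ≫ f.1 ≫ biprod.snd : CategoryTheory.End V) ⊗ₜ[ℝ] Complex.I
      : CategoryTheory.End V ⊗[ℝ] ℂ)

lemma comp21 (f : CategoryTheory.End ((Efunctor R).obj V)) :
    biprod.inr ≫ f.1 ≫ biprod.fst = -(biprod.inl ≫ f.1 ≫ biprod.snd) := by
  have key : ∀ m : V ⊞ V ⟶ V ⊞ V, (-(biprod.snd ≫ biprod.inl) + biprod.fst ≫ biprod.inr : V ⊞ V ⟶ V ⊞ V) ≫ m = m ≫ (-(biprod.snd ≫ biprod.inl) + biprod.fst ≫ biprod.inr : V ⊞ V ⟶ V ⊞ V) →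
      biprod.inr ≫ m ≫ biprod.fst = -(biprod.inl ≫ m ≫ biprod.snd) := by
    intro m h
    have := congrArg (fun t => biprod.inl ≫ t ≫ biprod.fst) h
    simpa using this
  exact key f.1 f.2

lemma comp22 (f : CategoryTheory.End ((Efunctor R).obj V)) :
    biprod.inr ≫ f.1 ≫ biprod.snd = biprod.inl ≫ f.1 ≫ biprod.fst := by
  have key : ∀ m : V ⊞ V ⟶ V ⊞ V, (-(biprod.snd ≫ biprod.inl) + biprod.fst ≫ biprod.inr : V ⊞ V ⟶ V ⊞ V) ≫ m = m ≫ (-(biprod.snd ≫ biprod.inl) + biprod.fst ≫ biprod.inr : V ⊞ V ⟶ V ⊞ V) →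
      biprod.inr ≫ m ≫ biprod.snd = biprod.inl ≫ m ≫ biprod.fst := by
    intro m h
    have := congrArg (fun t => biprod.inl ≫ t ≫ biprod.snd) h
    simpa using this
  exact key f.1 f.2

@[simp] lemma end_add_coe (f g : CategoryTheory.End ((Efunctor R).obj V)) :
    (f + g).1 = f.1 + g.1 := rfl

@[simp] lemma end_zero_coe : (0 : CategoryTheory.End ((Efunctor R).obj V)).1 = 0 := rfl

lemma end_mul_coe (f g : CategoryTheory.End ((Efunctor R).obj V)) :
    (f * g).1 = g.1 ≫ f.1 := rfl

lemma s6f_add (f g : CategoryTheory.End ((Efunctor R).obj V)) :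
    s6f V (f + g) = s6f V f + s6f V g := by
  have key : ∀ a b : V ⊞ V ⟶ V ⊞ V,
      ((biprod.inl ≫ (a + b) ≫ biprod.fst : CategoryTheory.End V) ⊗ₜ[ℝ] (1 : ℂ)
        : CategoryTheory.End V ⊗[ℝ] ℂ)
      + ((biprod.inl ≫ (a + b) ≫ biprod.snd : CategoryTheory.End V) ⊗ₜ[ℝ] Complex.I : CategoryTheory.End V ⊗[ℝ] ℂ)
      = (((biprod.inl ≫ a ≫ biprod.fst : CategoryTheory.End V) ⊗ₜ[ℝ] (1 : ℂ)
        : CategoryTheory.End V ⊗[ℝ] ℂ)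
        + ((biprod.inl ≫ a ≫ biprod.snd : CategoryTheory.End V) ⊗ₜ[ℝ] Complex.I : CategoryTheory.End V ⊗[ℝ] ℂ))
      + (((biprod.inl ≫ b ≫ biprod.fst : CategoryTheory.End V) ⊗ₜ[ℝ] (1 : ℂ)
        : CategoryTheory.End V ⊗[ℝ] ℂ)
        + ((biprod.inl ≫ b ≫ biprod.snd : CategoryTheory.End V) ⊗ₜ[ℝ] Complex.I : CategoryTheory.End V ⊗[ℝ] ℂ)) := by
    intro a b
    simp only [Preadditive.add_comp, Preadditive.comp_add, TensorProduct.add_tmul]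
    abel
  exact key f.1 g.1

lemma recon (a b : V ⟶ V) (m : V ⊞ V ⟶ V ⊞ V)
    (h11 : biprod.inl ≫ m ≫ biprod.fst = a) (h12 : biprod.inl ≫ m ≫ biprod.snd = b)
    (h21 : biprod.inr ≫ m ≫ biprod.fst = -b) (h22 : biprod.inr ≫ m ≫ biprod.snd = a) :
    biprod.map a a + biprod.map b b
      ≫ (-(biprod.snd ≫ biprod.inl) + biprod.fst ≫ biprod.inr) = m := by
  apply biprod.hom_ext' <;> apply biprod.hom_ext <;>
    simp [← h11, ← h12, h21, h22, reassoc_of% h21, reassoc_of% h22]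

lemma s6j_coe (x : V ⟶ V) (z : ℂ) :
    (TensorProduct.lift (s6bil V) (x ⊗ₜ[ℝ] z)).1
      = z.re • biprod.map x x
        + z.im • (biprod.map x x
            ≫ (-(biprod.snd ≫ biprod.inl) + biprod.fst ≫ biprod.inr)) := by
  rw [TensorProduct.lift.tmul]
  rfl

lemma s6f_lift (x : V ⟶ V) (z : ℂ) :
    s6f V (TensorProduct.lift (s6bil V) (x ⊗ₜ[ℝ] z)) = x ⊗ₜ[ℝ] z := by
  have h1 : biprod.inl ≫ (TensorProduct.lift (s6bil V) (x ⊗ₜ[ℝ] z)).1 ≫ biprod.fst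
      = z.re • x := by
    have key : ∀ M : V ⊞ V ⟶ V ⊞ V, M = z.re • biprod.map x x
        + z.im • (biprod.map x x ≫ (-(biprod.snd ≫ biprod.inl) + biprod.fst ≫ biprod.inr))
        → biprod.inl ≫ M ≫ biprod.fst = z.re • x := by
      rintro M rfl
      simp
    exact key _ (s6j_coe V x z)
  have h2 : biprod.inl ≫ (TensorProduct.lift (s6bil V) (x ⊗ₜ[ℝ] z)).1 ≫ biprod.snd
      = z.im • x := by
    have key : ∀ M : V ⊞ V ⟶ V ⊞ V, M = z.re • biprod.map x x
        + z.im • (biprod.map x x ≫ (-(biprod.snd ≫ biprod.inl) + biprod.fst ≫ biprod.inr))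
        → biprod.inl ≫ M ≫ biprod.snd = z.im • x := by
      rintro M rfl
      simp
    exact key _ (s6j_coe V x z)
  rw [s6f, h1, h2, TensorProduct.smul_tmul, TensorProduct.smul_tmul,
    ← TensorProduct.tmul_add]
  norm_num [Complex.real_smul, Complex.re_add_im]

lemma s6f_mul (f g : CategoryTheory.End ((Efunctor R).obj V)) :
    s6f V (f * g) = s6f V f * s6f V g := by
  have fin : ∀ a b : V ⊞ V ⟶ V ⊞ V,
      biprod.inr ≫ a ≫ biprod.fst = -(biprod.inl ≫ a ≫ biprod.snd) →
      biprod.inr ≫ a ≫ biprod.snd = biprod.inl ≫ a ≫ biprod.fst →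
      ((biprod.inl ≫ (b ≫ a) ≫ biprod.fst : CategoryTheory.End V) ⊗ₜ[ℝ] (1 : ℂ)
        : CategoryTheory.End V ⊗[ℝ] ℂ)
      + ((biprod.inl ≫ (b ≫ a) ≫ biprod.snd : CategoryTheory.End V) ⊗ₜ[ℝ] Complex.I : CategoryTheory.End V ⊗[ℝ] ℂ)
      = ((((biprod.inl ≫ a ≫ biprod.fst : CategoryTheory.End V) ⊗ₜ[ℝ] (1 : ℂ)
        : CategoryTheory.End V ⊗[ℝ] ℂ)
        + ((biprod.inl ≫ a ≫ biprod.snd : CategoryTheory.End V) ⊗ₜ[ℝ] Complex.I : CategoryTheory.End V ⊗[ℝ] ℂ))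
      * (((biprod.inl ≫ b ≫ biprod.fst : CategoryTheory.End V) ⊗ₜ[ℝ] (1 : ℂ)
        : CategoryTheory.End V ⊗[ℝ] ℂ)
        + ((biprod.inl ≫ b ≫ biprod.snd : CategoryTheory.End V) ⊗ₜ[ℝ] Complex.I : CategoryTheory.End V ⊗[ℝ] ℂ))) := by
    intro a b h21 h22
    have hdec : biprod.inl ≫ b
        = (biprod.inl ≫ b ≫ biprod.fst) ≫ biprod.inl
          + (biprod.inl ≫ b ≫ biprod.snd) ≫ biprod.inr := by
      apply biprod.hom_ext <;> simp
    have c1 : biprod.inl ≫ (b ≫ a) ≫ biprod.fst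
        = (biprod.inl ≫ b ≫ biprod.fst) ≫ (biprod.inl ≫ a ≫ biprod.fst)
          - (biprod.inl ≫ b ≫ biprod.snd) ≫ (biprod.inl ≫ a ≫ biprod.snd) := by
      rw [show biprod.inl ≫ (b ≫ a) ≫ biprod.fst
          = (biprod.inl ≫ b) ≫ a ≫ biprod.fst from by simp only [Category.assoc],
        hdec]
      simp only [Preadditive.add_comp, Category.assoc, h21]
      simp [sub_eq_add_neg]
    have c2 : biprod.inl ≫ (b ≫ a) ≫ biprod.snd
        = (biprod.inl ≫ b ≫ biprod.fst) ≫ (biprod.inl ≫ a ≫ biprod.snd)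
          + (biprod.inl ≫ b ≫ biprod.snd) ≫ (biprod.inl ≫ a ≫ biprod.fst) := by
      rw [show biprod.inl ≫ (b ≫ a) ≫ biprod.snd
          = (biprod.inl ≫ b) ≫ a ≫ biprod.snd from by simp only [Category.assoc],
        hdec]
      simp only [Preadditive.add_comp, Category.assoc, h22]
    rw [c1, c2]
    have endmul : ∀ a c : CategoryTheory.End V, a * c = c ≫ a := fun _ _ => rfl
    rw [add_mul, mul_add, mul_add, Algebra.TensorProduct.tmul_mul_tmul,
      Algebra.TensorProduct.tmul_mul_tmul, Algebra.TensorProduct.tmul_mul_tmul,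
      Algebra.TensorProduct.tmul_mul_tmul, Complex.I_mul_I, one_mul, mul_one, one_mul,
      endmul, endmul, endmul, endmul, TensorProduct.tmul_neg,
      TensorProduct.sub_tmul, TensorProduct.add_tmul]
    abel
  exact fin f.1 g.1 (comp21 V f) (comp22 V f)

noncomputable def s6equiv :
    CategoryTheory.End ((Efunctor R).obj V) ≃+* (CategoryTheory.End V) ⊗[ℝ] ℂ where
  toFun := s6f V
  invFun := TensorProduct.lift (s6bil V)
  left_inv f := by
    rw [s6f, map_add]
    apply CObj.hom_ext
    rw [CObj.add_coe, s6j_coe, s6j_coe]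
    rw [Complex.one_re, Complex.one_im, Complex.I_re, Complex.I_im, one_smul,
      zero_smul, zero_smul, one_smul]
    refine Eq.trans ?_ (recon V _ _ f.1 rfl rfl (comp21 V f) (comp22 V f))
    exact congrArg₂ (· + ·) (add_zero _) (zero_add _)
  right_inv t := by
    induction t using TensorProduct.induction_on with
    | zero =>
      rw [map_zero]
      exact (by simp : ((biprod.inl ≫ (0 : V ⊞ V ⟶ V ⊞ V) ≫ biprod.fst : CategoryTheory.End V)
        ⊗ₜ[ℝ] (1 : ℂ) : CategoryTheory.End V ⊗[ℝ] ℂ)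
        + ((biprod.inl ≫ (0 : V ⊞ V ⟶ V ⊞ V) ≫ biprod.snd : CategoryTheory.End V)
          ⊗ₜ[ℝ] Complex.I : CategoryTheory.End V ⊗[ℝ] ℂ) = 0)
    | tmul x z => exact s6f_lift V x z
    | add a b ha hb => rw [map_add, s6f_add, ha, hb]
  map_mul' := s6f_mul V
  map_add' := s6f_add V

end Statement6Aux


variable [EssentiallySmall.{v} R]

theorem statement6
    (hfin : ∀ V : R, Simple V → FiniteDimensional ℝ (V ⟶ V)) (V : R) :
    ∃ e : CategoryTheory.End ((Efunctor R).obj V) ≃+* (CategoryTheory.End V) ⊗[ℝ] ℂ,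
      (∀ f : CategoryTheory.End ((Efunctor R).obj V),
          e f = (biprod.inl ≫ f.1 ≫ biprod.fst) ⊗ₜ[ℝ] (1 : ℂ)
              + (biprod.inl ≫ f.1 ≫ biprod.snd) ⊗ₜ[ℝ] Complex.I) ∧
      (∀ f : CategoryTheory.End ((Efunctor R).obj V),
          e (f ≫ iMor ((Efunctor R).obj V)) = e f * (((𝟙 V : CategoryTheory.End V) ⊗ₜ[ℝ] Complex.I : CategoryTheory.End V ⊗[ℝ] ℂ))) := by
  refine ⟨s6equiv V, fun f => rfl, fun f => ?_⟩
  have h1 : biprod.inl ≫ (f ≫ iMor ((Efunctor R).obj V)).1 ≫ biprod.fst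
      = -(biprod.inl ≫ f.1 ≫ biprod.snd) := by
    have key : ∀ m : V ⊞ V ⟶ V ⊞ V,
        biprod.inl ≫ (m ≫ (-(biprod.snd ≫ biprod.inl) + biprod.fst ≫ biprod.inr : V ⊞ V ⟶ V ⊞ V)) ≫ biprod.fst = -(biprod.inl ≫ m ≫ biprod.snd) := by
      intro m; simp
    exact key f.1
  have h2 : biprod.inl ≫ (f ≫ iMor ((Efunctor R).obj V)).1 ≫ biprod.snd
      = biprod.inl ≫ f.1 ≫ biprod.fst := by
    have key : ∀ m : V ⊞ V ⟶ V ⊞ V,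
        biprod.inl ≫ (m ≫ (-(biprod.snd ≫ biprod.inl) + biprod.fst ≫ biprod.inr : V ⊞ V ⟶ V ⊞ V)) ≫ biprod.snd = biprod.inl ≫ m ≫ biprod.fst := by
      intro m; simp
    exact key f.1
  show s6f V _ = s6f V f * _
  rw [s6f, s6f, h1, h2]
  have endmul : ∀ a c : CategoryTheory.End V, a * c = (c ≫ a : _) := fun _ _ => rfl
  rw [add_mul, Algebra.TensorProduct.tmul_mul_tmul, Algebra.TensorProduct.tmul_mul_tmul,
    Complex.I_mul_I, one_mul, endmul, endmul, Category.id_comp, Category.id_comp,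
    TensorProduct.tmul_neg, TensorProduct.neg_tmul]
  abel
end

section
/- Let V be a simple object of R whose endomorphism algebra End_R(V) is one-dimensional over ℝ (i.e., consists of the real scalar multiples of the identity). Then W := E(V) is a simple object of C; the morphism ε₁∘π₂ + ε₂∘π₁ is an isomorphism φ : W → B(W) in C satisfying B(φ)∘φ = 1_W; and there exists no isomorphism ψ : W → B(W) in C with B(ψ)∘ψ = -1_W. -/
set_option linter.unusedSectionVars false

open CategoryTheory CategoryTheory.Limits

universe v u

variable (R : Type u) [Category.{v} R] [Abelian R] [CategoryTheory.Linear ℝ R]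

variable {R}

variable (R)

variable {R}

open scoped TensorProduct Quaternion

variable [EssentiallySmall.{v} R]

theorem statement7
    (hfin : ∀ V : R, Simple V → FiniteDimensional ℝ (V ⟶ V)) (V : R) [Simple V]
    (h1 : ∀ f : V ⟶ V, ∃ c : ℝ, f = c • 𝟙 V) :
    Simple ((Efunctor R).obj V) ∧
    (∃ φ : (Efunctor R).obj V ⟶ (Bfunctor R).obj ((Efunctor R).obj V),
        φ.1 = biprod.snd ≫ biprod.inl + biprod.fst ≫ biprod.inr ∧ IsIso φ ∧
        φ.1 ≫ φ.1 = 𝟙 ((Efunctor R).obj V).V) ∧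
    ¬∃ ψ : (Efunctor R).obj V ⟶ (Bfunctor R).obj ((Efunctor R).obj V),
        IsIso ψ ∧ ψ.1 ≫ ψ.1 = -𝟙 ((Efunctor R).obj V).V := by
  classical
  have hidne : (𝟙 (V ⊞ V) : V ⊞ V ⟶ V ⊞ V) ≠ 0 := by
    intro h
    apply id_nonzero V
    calc 𝟙 V = biprod.inl ≫ 𝟙 (V ⊞ V) ≫ biprod.fst := by simp
    _ = 0 := by rw [h]; simp
  have hWι : ((Efunctor R).obj V).ι
      = -(biprod.snd ≫ biprod.inl) + biprod.fst ≫ biprod.inr := rfl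
  -- scalar helper
  have hscal : ∀ c : ℝ, c • 𝟙 V = 0 → c = 0 := by
    intro c hc
    by_contra hcne
    apply id_nonzero V
    rw [← one_smul ℝ (𝟙 V), ← inv_mul_cancel₀ hcne, mul_smul, hc, smul_zero]
  -- Simplicity
  have hsimple : Simple ((Efunctor R).obj V) := by
    constructor
    intro Y f m
    constructor
    · intro hiso h0
      apply hidne
      have h := congrArg Subtype.val (IsIso.inv_hom_id f)
      have hv : f.1 = (0 : Y ⟶ (Efunctor R).obj V).1 := congrArg Subtype.val h0
      simp only [CObj.comp_coe, CObj.id_coe, CObj.zero_coe] at h hv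
      rw [hv, comp_zero] at h
      exact h.symm
    · intro hf
      have hf1 : f.1 ≠ 0 := fun h => hf (Subtype.ext h)
      -- f.1 is mono
      haveI hmono : Mono f.1 := by
        apply Preadditive.mono_of_kernel_zero
        have hlift : (kernel.ι f.1 ≫ Y.ι) ≫ f.1 = 0 := by
          rw [Category.assoc, f.2, ← Category.assoc, kernel.condition, zero_comp]
        set κ := kernel.lift f.1 (kernel.ι f.1 ≫ Y.ι) hlift with hκ
        have hκk : κ ≫ kernel.ι f.1 = kernel.ι f.1 ≫ Y.ι := kernel.lift_ι _ _ _
        have hκκ : κ ≫ κ = -𝟙 _ := by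
          rw [← cancel_mono (kernel.ι f.1)]
          rw [Category.assoc, hκk, ← Category.assoc, hκk, Category.assoc, Y.hι]
          simp
        let K : CObj R := ⟨_, κ, hκκ⟩
        let kc : K ⟶ Y := ⟨kernel.ι f.1, hκk⟩
        have hkc0 : kc ≫ f = 0 := Subtype.ext (kernel.condition f.1)
        have hkc : kc = 0 := by
          rw [← cancel_mono f, hkc0, zero_comp]
        exact congrArg Subtype.val hkc
      -- components
      have hι1 : Y.ι ≫ f.1 ≫ biprod.fst = -(f.1 ≫ biprod.snd) := by
        have h := congrArg (fun m => m ≫ biprod.fst) f.2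
        simpa [hWι, Category.assoc, Efunctor] using h
      have hι2 : Y.ι ≫ f.1 ≫ biprod.snd = f.1 ≫ biprod.fst := by
        have h := congrArg (fun m => m ≫ biprod.snd) f.2
        simpa [hWι, Category.assoc, Efunctor] using h
      have hg1ne : f.1 ≫ biprod.fst ≠ 0 := by
        intro h
        apply hf1
        have h2 : f.1 ≫ biprod.snd = 0 := by
          have := hι1
          rw [h, comp_zero] at this
          have := this.symm
          rw [neg_eq_zero] at this
          exact this
        apply biprod.hom_ext
        · exact h.trans zero_comp.symm
        · exact h2.trans zero_comp.symm
      by_cases hm : Mono (f.1 ≫ biprod.fst)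
      · exfalso
        haveI : IsIso (f.1 ≫ biprod.fst) := isIso_of_mono_of_nonzero hg1ne
        obtain ⟨c, hc⟩ := h1 (inv (f.1 ≫ biprod.fst) ≫ Y.ι ≫ (f.1 ≫ biprod.fst))
        have he : (inv (f.1 ≫ biprod.fst) ≫ Y.ι ≫ (f.1 ≫ biprod.fst))
            ≫ (inv (f.1 ≫ biprod.fst) ≫ Y.ι ≫ (f.1 ≫ biprod.fst)) = -𝟙 V := by
          calc (inv (f.1 ≫ biprod.fst) ≫ Y.ι ≫ (f.1 ≫ biprod.fst))
              ≫ (inv (f.1 ≫ biprod.fst) ≫ Y.ι ≫ (f.1 ≫ biprod.fst))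
              = inv (f.1 ≫ biprod.fst) ≫ Y.ι ≫ ((f.1 ≫ biprod.fst)
                ≫ inv (f.1 ≫ biprod.fst)) ≫ Y.ι ≫ (f.1 ≫ biprod.fst) := by
                simp only [Category.assoc]
          _ = inv (f.1 ≫ biprod.fst) ≫ (Y.ι ≫ Y.ι) ≫ (f.1 ≫ biprod.fst) := by
                rw [IsIso.hom_inv_id]; simp only [Category.id_comp, Category.assoc]
          _ = -𝟙 V := by rw [Y.hι]; simp
        rw [hc] at he
        have hcc : (c * c) • 𝟙 V = -𝟙 V := by
          simpa [smul_smul, Linear.smul_comp, Linear.comp_smul] using he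
        have h0 : (c * c + 1) • 𝟙 V = 0 := by
          rw [add_smul, one_smul, hcc]; simp
        have := hscal _ h0
        nlinarith [sq_nonneg c]
      · -- g1 not mono: kernel is nonzero
        have hker : kernel.ι (f.1 ≫ biprod.fst) ≠ 0 :=
          fun h => hm (Preadditive.mono_of_kernel_zero h)
        have hkg1 : kernel.ι (f.1 ≫ biprod.fst) ≫ f.1 ≫ biprod.fst = 0 := by
          simpa [Category.assoc] using kernel.condition (f.1 ≫ biprod.fst)
        have hkf : kernel.ι (f.1 ≫ biprod.fst) ≫ f.1
            = (kernel.ι (f.1 ≫ biprod.fst) ≫ f.1 ≫ biprod.snd) ≫ biprod.inr := by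
          apply biprod.hom_ext <;> simp [Category.assoc, hkg1, Efunctor]
          exact hkg1
        haveI humono : Mono (kernel.ι (f.1 ≫ biprod.fst) ≫ f.1 ≫ biprod.snd) := by
          haveI : Mono (kernel.ι (f.1 ≫ biprod.fst) ≫ f.1) := mono_comp _ _
          rw [hkf] at this
          exact @mono_of_mono R _ _ _ _
            (kernel.ι (f.1 ≫ biprod.fst) ≫ f.1 ≫ biprod.snd) biprod.inr this
        have hune : kernel.ι (f.1 ≫ biprod.fst) ≫ f.1 ≫ biprod.snd ≠ 0 := by
          intro h
          apply hker
          have h2 : kernel.ι (f.1 ≫ biprod.fst) ≫ f.1 = 0 := by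
            rw [hkf, h, zero_comp]; rfl
          rw [← cancel_mono f.1, zero_comp]
          exact h2
        haveI : IsIso (kernel.ι (f.1 ≫ biprod.fst) ≫ f.1 ≫ biprod.snd) :=
          isIso_of_mono_of_nonzero hune
        set u := kernel.ι (f.1 ≫ biprod.fst) ≫ f.1 ≫ biprod.snd with hu
        set k := kernel.ι (f.1 ≫ biprod.fst) with hk
        have hinvu : inv u ≫ k ≫ f.1 ≫ biprod.snd = 𝟙 V := by
          rw [← hu, IsIso.inv_hom_id]
        have hkzero : inv u ≫ k ≫ f.1 ≫ biprod.fst = 0 := by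
          rw [hkg1, comp_zero]
        have hkι1 : inv u ≫ k ≫ Y.ι ≫ f.1 ≫ biprod.fst = -𝟙 V := by
          rw [hι1, Preadditive.comp_neg, Preadditive.comp_neg, hinvu]
        have hkι2 : inv u ≫ k ≫ Y.ι ≫ f.1 ≫ biprod.snd = 0 := by
          rw [hι2, hkzero]
        have ht : (biprod.fst ≫ (-(inv u ≫ k ≫ Y.ι)) + biprod.snd ≫ (inv u ≫ k)) ≫ f.1
            = 𝟙 (V ⊞ V) := by
          apply biprod.hom_ext' <;> apply biprod.hom_ext <;>
            simp [Category.assoc, hkι1, hkι2, hkzero, hinvu, Efunctor]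
          · exact (congrArg (fun t => -(inv u ≫ t)) (Category.assoc k Y.ι _)).trans
              ((congrArg Neg.neg hkι1).trans (neg_neg _))
          · exact (congrArg (fun t => inv u ≫ t) (Category.assoc k Y.ι _)).trans hkι2
          · exact (Category.assoc _ _ _).trans hkzero
          · exact (Category.assoc _ _ _).trans hinvu
        haveI : IsSplitEpi f.1 := IsSplitEpi.mk'
          ⟨biprod.fst ≫ (-(inv u ≫ k ≫ Y.ι)) + biprod.snd ≫ (inv u ≫ k), ht⟩
        haveI : Epi f.1 := IsSplitEpi.epi f.1
        haveI hiso1 : IsIso f.1 := isIso_of_mono_of_epi f.1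
        have hcomm' : ((Efunctor R).obj V).ι ≫ inv f.1 = inv f.1 ≫ Y.ι := by
          symm
          rw [IsIso.inv_comp_eq]
          rw [← Category.assoc, ← f.2, Category.assoc, IsIso.hom_inv_id, Category.comp_id]
        exact ⟨⟨inv f.1, hcomm'⟩,
          Subtype.ext (by simp), Subtype.ext (by simp)⟩
  -- Part 2
  have hmain1 : ((-(biprod.snd ≫ biprod.inl) + biprod.fst ≫ biprod.inr : V ⊞ V ⟶ V ⊞ V))
      ≫ (biprod.snd ≫ biprod.inl + biprod.fst ≫ biprod.inr)
      = (biprod.snd ≫ biprod.inl + biprod.fst ≫ biprod.inr)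
      ≫ (-(-(biprod.snd ≫ biprod.inl) + biprod.fst ≫ biprod.inr)) := by
    ext <;> simp
  have hφcomm : ((Efunctor R).obj V).ι
      ≫ (biprod.snd ≫ biprod.inl + biprod.fst ≫ biprod.inr)
      = (biprod.snd ≫ biprod.inl + biprod.fst ≫ biprod.inr)
      ≫ ((Bfunctor R).obj ((Efunctor R).obj V)).ι := hmain1
  have hmain2 : ((-(-(biprod.snd ≫ biprod.inl) + biprod.fst ≫ biprod.inr) : V ⊞ V ⟶ V ⊞ V))
      ≫ (biprod.snd ≫ biprod.inl + biprod.fst ≫ biprod.inr)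
      = (biprod.snd ≫ biprod.inl + biprod.fst ≫ biprod.inr)
      ≫ (-(biprod.snd ≫ biprod.inl) + biprod.fst ≫ biprod.inr) := by
    ext <;> simp
  have hφcomm2 : ((Bfunctor R).obj ((Efunctor R).obj V)).ι
      ≫ (biprod.snd ≫ biprod.inl + biprod.fst ≫ biprod.inr)
      = (biprod.snd ≫ biprod.inl + biprod.fst ≫ biprod.inr)
      ≫ ((Efunctor R).obj V).ι := hmain2
  have hφsq : (biprod.snd ≫ biprod.inl + biprod.fst ≫ biprod.inr : V ⊞ V ⟶ V ⊞ V)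
      ≫ (biprod.snd ≫ biprod.inl + biprod.fst ≫ biprod.inr) = 𝟙 (V ⊞ V) := by
    ext <;> simp
  refine ⟨hsimple, ⟨⟨biprod.snd ≫ biprod.inl + biprod.fst ≫ biprod.inr, hφcomm⟩,
    rfl, ⟨⟨⟨biprod.snd ≫ biprod.inl + biprod.fst ≫ biprod.inr, hφcomm2⟩,
      Subtype.ext hφsq, Subtype.ext hφsq⟩⟩, hφsq⟩, ?_⟩
  -- Part 3
  rintro ⟨ψ, -, hsq⟩
  obtain ⟨M, hM⟩ : ∃ M : V ⊞ V ⟶ V ⊞ V, M = ψ.1 := ⟨ψ.1, rfl⟩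
  have hMsq : M ≫ M = -𝟙 (V ⊞ V) := by rw [hM]; exact hsq
  have hMcomm : (-(biprod.snd ≫ biprod.inl) + biprod.fst ≫ biprod.inr) ≫ M
      = M ≫ (-(-(biprod.snd ≫ biprod.inl) + biprod.fst ≫ biprod.inr)) := by
    rw [hM]; exact ψ.2
  obtain ⟨a, ha⟩ := h1 (biprod.inl ≫ M ≫ biprod.fst)
  obtain ⟨b, hb⟩ := h1 (biprod.inl ≫ M ≫ biprod.snd)
  have h21 : biprod.inr ≫ M ≫ biprod.fst = b • 𝟙 V := by
    have h := congrArg (fun m => biprod.inl ≫ m ≫ biprod.fst) hMcomm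
    simp only [Preadditive.add_comp, Preadditive.comp_add, Preadditive.neg_comp,
      Preadditive.comp_neg, Category.assoc, biprod.inl_fst, biprod.inl_snd,
      biprod.inr_fst, biprod.inr_snd, comp_zero, zero_comp, Category.comp_id,
      neg_neg, add_zero, zero_add, neg_zero] at h
    rw [← hb]
    simpa using h
  have hkey : biprod.inl ≫ (M ≫ M) ≫ biprod.fst
      = biprod.inl ≫ (-𝟙 (V ⊞ V)) ≫ biprod.fst := by rw [hMsq]
  rw [show M ≫ M
      = M ≫ (biprod.fst ≫ biprod.inl + biprod.snd ≫ biprod.inr) ≫ M from by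
    rw [biprod.total]; simp] at hkey
  simp only [Preadditive.add_comp, Preadditive.comp_add, Preadditive.neg_comp,
    Preadditive.comp_neg, Category.assoc, ha, hb, h21, Linear.comp_smul,
    Linear.smul_comp, Category.comp_id, Category.id_comp, smul_smul] at hkey
  have h0 : (a * a + b * b + 1) • 𝟙 V = 0 := by
    rw [add_smul, add_smul, one_smul]
    rw [show (a * a) • 𝟙 V + (b * b) • 𝟙 V = -𝟙 V from by simpa using hkey]
    simp
  have := hscal _ h0
  nlinarith [sq_nonneg a, sq_nonneg b]
end

section
/- Let V be a simple object of R and ι ∈ End_R(V) with ι∘ι = -1_V; set W := (V, ι), an object of C, so that B(W) = (V, -ι). Then: (a) E(V) ≅ W ⊕ B(W) in C; (b) if the algebra End_R(V) is commutative, then W and B(W) are not isomorphic in C; (c) if End_R(V) is isomorphic as an ℝ-algebra to the quaternions ℍ via an isomorphism sending the quaternion i to ι, and j ∈ End_R(V) denotes the image of the quaternion j, then j is an isomorphism φ : W → B(W) in C satisfying B(φ)∘φ = -1_W, and there exists no isomorphism ψ : W → B(W) in C with B(ψ)∘ψ = 1_W. -/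
set_option linter.unusedSectionVars false

open CategoryTheory CategoryTheory.Limits

universe v u

variable (R : Type u) [Category.{v} R] [Abelian R] [CategoryTheory.Linear ℝ R]

variable {R}

variable (R)

variable {R}

open scoped TensorProduct Quaternion

variable [EssentiallySmall.{v} R]

theorem statement8
    (hfin : ∀ V : R, Simple V → FiniteDimensional ℝ (V ⟶ V)) (V : R) [Simple V]
    (ι : V ⟶ V) (hι : ι ≫ ι = -𝟙 V) :
    Nonempty ((Efunctor R).obj V ≅
        csum (CObj.mk V ι hι) ((Bfunctor R).obj (CObj.mk V ι hι))) ∧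
    ((∀ f g : V ⟶ V, f ≫ g = g ≫ f) →
        ¬Nonempty ((CObj.mk V ι hι) ≅ (Bfunctor R).obj (CObj.mk V ι hι))) ∧
    (∀ e : ℍ[ℝ] ≃ₐ[ℝ] CategoryTheory.End V, e ⟨0, 1, 0, 0⟩ = ι →
      (∃ φ : (CObj.mk V ι hι) ⟶ (Bfunctor R).obj (CObj.mk V ι hι),
          φ.1 = e ⟨0, 0, 1, 0⟩ ∧ IsIso φ ∧ φ.1 ≫ φ.1 = -𝟙 V) ∧
      ¬∃ ψ : (CObj.mk V ι hι) ⟶ (Bfunctor R).obj (CObj.mk V ι hι),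
          IsIso ψ ∧ ψ.1 ≫ ψ.1 = 𝟙 V) := by
  refine ⟨?_, ?_, ?_⟩
  · -- part (a)
    refine ⟨⟨⟨(biprod.lift (biprod.fst + biprod.snd ≫ ι) (biprod.fst - biprod.snd ≫ ι) : V ⊞ V ⟶ V ⊞ V), ?_⟩,
      ⟨(1/2 : ℝ) • biprod.lift (biprod.fst + biprod.snd)
        (-(biprod.fst ≫ ι) + biprod.snd ≫ ι), ?_⟩, ?_, ?_⟩⟩
    · dsimp only [Efunctor, csum, Bfunctor]
      ext <;> simp [hι]
    · dsimp only [Efunctor, csum, Bfunctor]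
      ext <;> simp [hι]
    · apply Subtype.ext
      simp only [CObj.comp_coe, CObj.id_coe]
      dsimp only [Efunctor, csum, Bfunctor]
      ext <;> simp [hι] <;> module
    · apply Subtype.ext
      simp only [CObj.comp_coe, CObj.id_coe]
      dsimp only [Efunctor, csum, Bfunctor]
      ext <;> simp [hι] <;> module
  · -- part (b)
    rintro hcomm ⟨isom⟩
    have hφ : isom.hom.1 ≫ ι = -(isom.hom.1 ≫ ι) :=
      (hcomm ι isom.hom.1).symm.trans (isom.hom.2.trans (Preadditive.comp_neg _ _))
    have h0 : isom.hom.1 ≫ ι = 0 := by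
      rw [eq_neg_iff_add_eq_zero, ← two_smul ℝ] at hφ
      have h2 := congrArg (fun y => (1/2 : ℝ) • y) hφ
      simpa [smul_smul, show (1/2 : ℝ) * 2 = 1 by norm_num] using h2
    have hφ0 : isom.hom.1 = 0 := by
      have h3 : (isom.hom.1 ≫ ι) ≫ ι = 0 ≫ ι := by rw [h0]
      erw [Category.assoc, hι, Preadditive.comp_neg, Limits.zero_comp, neg_eq_zero] at h3
      have h4 : isom.hom.1 ≫ 𝟙 V = isom.hom.1 := Category.comp_id _
      rwa [h4] at h3
    have hinv := congrArg Subtype.val isom.hom_inv_id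
    simp only [CObj.comp_coe, CObj.id_coe] at hinv
    rw [hφ0, Limits.zero_comp] at hinv
    exact CategoryTheory.id_nonzero V hinv.symm
  · -- part (c)
    intro e he
    have hji : ((⟨0,0,1,0⟩ : ℍ[ℝ]) * ⟨0,1,0,0⟩) = -((⟨0,1,0,0⟩ : ℍ[ℝ]) * ⟨0,0,1,0⟩) := by
      ext <;> simp
    have hjj : ((⟨0,0,1,0⟩ : ℍ[ℝ]) * ⟨0,0,1,0⟩) = -1 := by ext <;> simp
    have h1 : ι ≫ (e ⟨0,0,1,0⟩ : V ⟶ V) = (e ⟨0,0,1,0⟩ : V ⟶ V) ≫ (-ι) := by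
      rw [← he]
      calc (e ⟨0,1,0,0⟩ : V ⟶ V) ≫ (e ⟨0,0,1,0⟩ : V ⟶ V) = e ⟨0,0,1,0⟩ * e ⟨0,1,0,0⟩ := rfl
        _ = e (⟨0,0,1,0⟩ * ⟨0,1,0,0⟩) := (map_mul e _ _).symm
        _ = e (-(⟨0,1,0,0⟩ * ⟨0,0,1,0⟩)) := congrArg e hji
        _ = -(e ⟨0,1,0,0⟩ * e ⟨0,0,1,0⟩) := (map_neg e _).trans (congrArg Neg.neg (map_mul e _ _))
        _ = (-(e ⟨0,1,0,0⟩)) * e ⟨0,0,1,0⟩ := (neg_mul _ _).symm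
        _ = (e ⟨0,0,1,0⟩ : V ⟶ V) ≫ (-(e ⟨0,1,0,0⟩ : V ⟶ V)) := rfl
    have hsq : (e ⟨0,0,1,0⟩ : V ⟶ V) ≫ (e ⟨0,0,1,0⟩ : V ⟶ V) = -𝟙 V := by
      calc (e ⟨0,0,1,0⟩ : V ⟶ V) ≫ (e ⟨0,0,1,0⟩ : V ⟶ V) = e ⟨0,0,1,0⟩ * e ⟨0,0,1,0⟩ := rfl
        _ = e (⟨0,0,1,0⟩ * ⟨0,0,1,0⟩) := (map_mul e _ _).symm
        _ = e (-1) := congrArg e hjj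
        _ = -(e 1) := map_neg e 1
        _ = -𝟙 V := by rw [map_one]; rfl
    constructor
    · refine ⟨⟨e ⟨0,0,1,0⟩, h1⟩, rfl, ?_, hsq⟩
      have h1' : (-ι) ≫ (-(e ⟨0,0,1,0⟩ : V ⟶ V)) = (-(e ⟨0,0,1,0⟩ : V ⟶ V)) ≫ ι := by
        rw [Preadditive.neg_comp, Preadditive.comp_neg, neg_neg, h1, Preadditive.comp_neg,
          Preadditive.neg_comp]
      refine ⟨⟨⟨-(e ⟨0,0,1,0⟩), h1'⟩, ?_, ?_⟩⟩
      · apply Subtype.ext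
        show (e ⟨0,0,1,0⟩ : V ⟶ V) ≫ (-(e ⟨0,0,1,0⟩ : V ⟶ V)) = 𝟙 V
        rw [Preadditive.comp_neg, hsq, neg_neg]
      · apply Subtype.ext
        show (-(e ⟨0,0,1,0⟩ : V ⟶ V)) ≫ (e ⟨0,0,1,0⟩ : V ⟶ V) = 𝟙 V
        rw [Preadditive.neg_comp, hsq, neg_neg]
    · rintro ⟨ψ, -, hψsq⟩
      have hx : ι ≫ ψ.1 = ψ.1 ≫ (-ι) := ψ.2
      have hx2 : ι ≫ ψ.1 = -(ψ.1 ≫ ι) := hx.trans (Preadditive.comp_neg _ _)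
      have hXe : (show CategoryTheory.End V from ψ.1) * e ⟨0,1,0,0⟩ =
          -(e ⟨0,1,0,0⟩ * (show CategoryTheory.End V from ψ.1)) := by
        rw [he]; exact hx2
      have hXX : (show CategoryTheory.End V from ψ.1) *
          (show CategoryTheory.End V from ψ.1) = 1 := hψsq
      have hqi := congrArg e.symm hXe
      erw [map_mul, map_neg, map_mul, AlgEquiv.symm_apply_apply] at hqi
      have hqq := congrArg e.symm hXX
      rw [map_mul, map_one] at hqq
      generalize e.symm (show CategoryTheory.End V from ψ.1) = q at hqi hqq
      rw [Quaternion.ext_iff] at hqi hqq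
      simp [Quaternion.re_mul, Quaternion.imI_mul, Quaternion.imJ_mul,
        Quaternion.imK_mul] at hqi hqq
      have hr : q.re * 0 - q.imI * 1 - q.imJ * 0 - q.imK * 0 =
          -(0 * q.re - 1 * q.imI - 0 * q.imJ - 0 * q.imK) :=
        (Quaternion.re_mul q ⟨0,1,0,0⟩).symm.trans (hqi.1.trans (congrArg Neg.neg (Quaternion.re_mul ⟨0,1,0,0⟩ q)))
      have hi : q.re * 1 + q.imI * 0 + q.imJ * 0 - q.imK * 0 =
          -(0 * q.imI + 1 * q.re + 0 * q.imK - 0 * q.imJ) :=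
        (Quaternion.imI_mul q ⟨0,1,0,0⟩).symm.trans (hqi.2.1.trans (congrArg Neg.neg (Quaternion.imI_mul ⟨0,1,0,0⟩ q)))
      nlinarith [hr, hi, hqq.1, sq_nonneg q.imJ, sq_nonneg q.imK]
end

section
/- For every simple object W of C, exactly one of the following three alternatives holds: (+) there exists a simple object V of R with F(W) ≅ V ⊕ V; (∘) F(W) is a simple object of R and W is not isomorphic to B(W) in C; (−) F(W) is a simple object of R and W is isomorphic to B(W) in C. -/
set_option linter.unusedSectionVars false

open CategoryTheory CategoryTheory.Limits

universe v u

variable (R : Type u) [Category.{v} R] [Abelian R] [CategoryTheory.Linear ℝ R]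

variable {R}

variable (R)

variable {R}

open scoped TensorProduct Quaternion

variable [EssentiallySmall.{v} R]


section Statement11Aux

open Subobject

/-- The conjugate of a subobject by `ι`. -/
@[reducible]
noncomputable def mSub {X : R} (ι : X ⟶ X) [IsIso ι] (P : Subobject X) : Subobject X :=
  Subobject.mk (P.arrow ≫ ι)

lemma mSub_le_mSub {X : R} (ι : X ⟶ X) [IsIso ι] {P Q : Subobject X} (h : P ≤ Q) :
    mSub ι P ≤ mSub ι Q :=
  Subobject.mk_le_mk_of_comm (Subobject.ofLE P Q h)
    (by rw [← Category.assoc, Subobject.ofLE_arrow])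

lemma mSub_mSub {X : R} (ι : X ⟶ X) [IsIso ι] (hι : ι ≫ ι = -𝟙 X) (P : Subobject X) :
    mSub ι (mSub ι P) = P := by
  have harr : (Subobject.underlyingIso (P.arrow ≫ ι)).hom ≫ (P.arrow ≫ ι) =
      (mSub ι P).arrow := Subobject.underlyingIso_hom_comp_eq_mk _
  apply le_antisymm
  · apply Subobject.mk_le_of_comm (-(Subobject.underlyingIso (P.arrow ≫ ι)).hom)
    rw [← harr]
    simp only [Category.assoc, hι, Preadditive.neg_comp, Preadditive.comp_neg, neg_neg,
      Category.comp_id]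
  · apply Subobject.le_mk_of_comm (-(Subobject.underlyingIso (P.arrow ≫ ι)).inv)
    have harr' : (Subobject.underlyingIso (P.arrow ≫ ι)).inv ≫ (mSub ι P).arrow =
        P.arrow ≫ ι := Subobject.underlyingIso_arrow _
    rw [Preadditive.neg_comp, ← Category.assoc, harr']
    simp only [Category.assoc, hι, Preadditive.comp_neg, Category.comp_id, neg_neg]

/-- Conjugation as an order isomorphism on subobjects. -/
noncomputable def mOrderIso {X : R} (ι : X ⟶ X) [IsIso ι] (hι : ι ≫ ι = -𝟙 X) :
    Subobject X ≃o Subobject X where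
  toFun := mSub ι
  invFun := mSub ι
  left_inv := mSub_mSub ι hι
  right_inv := mSub_mSub ι hι
  map_rel_iff' := by
    intro P Q
    simp only [Equiv.coe_fn_mk]
    constructor
    · intro h
      have := mSub_le_mSub ι h
      rwa [mSub_mSub ι hι, mSub_mSub ι hι] at this
    · exact mSub_le_mSub ι

lemma mSub_sup {X : R} (ι : X ⟶ X) [IsIso ι] (hι : ι ≫ ι = -𝟙 X) (A B : Subobject X) :
    mSub ι (A ⊔ B) = mSub ι A ⊔ mSub ι B :=
  (mOrderIso ι hι).map_sup A B

lemma mSub_inf {X : R} (ι : X ⟶ X) [IsIso ι] (hι : ι ≫ ι = -𝟙 X) (A B : Subobject X) :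
    mSub ι (A ⊓ B) = mSub ι A ⊓ mSub ι B :=
  (mOrderIso ι hι).map_inf A B

lemma factors_sub {X A : R} {P : Subobject X} {f g : A ⟶ X}
    (hf : P.Factors f) (hg : P.Factors g) : P.Factors (f - g) := by
  have : (P.factorThru f hf - P.factorThru g hg) ≫ P.arrow = f - g := by
    simp [Preadditive.sub_comp]
  rw [← this]
  exact Subobject.factors_comp_arrow _

lemma eq_bot_iff_arrow_eq_zero {X : R} (P : Subobject X) : P = ⊥ ↔ P.arrow = 0 := by
  constructor
  · rintro rfl
    exact Subobject.bot_arrow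
  · intro h
    rw [← Subobject.mk_arrow P, Subobject.mk_eq_bot_iff_zero, h]

/-- A subobject of `W.V` stable under `W.ι` is `⊥` or `⊤` when `W` is simple in `C`. -/
lemma stable_bot_or_top (W : CObj R) [Simple W] (P : Subobject W.V)
    (h : P.Factors (P.arrow ≫ W.ι)) : P = ⊥ ∨ P = ⊤ := by
  have hcomm : P.factorThru _ h ≫ P.arrow = P.arrow ≫ W.ι := P.factorThru_arrow _ h
  set j := P.factorThru _ h with hjdef
  have hjj : j ≫ j = -𝟙 ((P : R)) := by
    rw [← cancel_mono P.arrow]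
    rw [Category.assoc, hcomm, ← Category.assoc, hcomm, Category.assoc, W.hι]
    simp
  by_cases h0 : P.arrow = 0
  · exact Or.inl ((eq_bot_iff_arrow_eq_zero P).mpr h0)
  · right
    let WP : CObj R := ⟨(P : R), j, hjj⟩
    let f : WP ⟶ W := ⟨P.arrow, hcomm⟩
    haveI : Mono f := ⟨fun g h' w => by
      apply CObj.hom_ext
      have hw := congrArg Subtype.val w
      simp only [CObj.comp_coe] at hw
      exact (cancel_mono P.arrow).mp hw⟩
    have hf0 : f ≠ 0 := fun w => h0 (congrArg Subtype.val w)
    haveI : IsIso f := (Simple.mono_isIso_iff_nonzero f).mpr hf0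
    have h1 : P.arrow ≫ (inv f).1 = 𝟙 _ := congrArg Subtype.val (IsIso.hom_inv_id f)
    have h2 : (inv f).1 ≫ P.arrow = 𝟙 _ := congrArg Subtype.val (IsIso.inv_hom_id f)
    haveI : IsIso P.arrow := ⟨(inv f).1, h1, h2⟩
    exact Subobject.eq_top_of_isIso_arrow P

/-- Complementary subobjects in an abelian category give a biproduct decomposition. -/
lemma isIso_desc_of_compl {X : R} (A B : Subobject X) (hinf : A ⊓ B = ⊥) (hsup : A ⊔ B = ⊤) :
    IsIso (biprod.desc A.arrow B.arrow) := by
  set φ := biprod.desc A.arrow B.arrow with hφ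
  haveI : Mono φ := by
    apply CategoryTheory.Abelian.mono_of_kernel_ι_eq_zero
    set k := kernel.ι φ with hk
    have hkc : k ≫ φ = 0 := kernel.condition φ
    have hsum : (k ≫ biprod.fst) ≫ A.arrow + (k ≫ biprod.snd) ≫ B.arrow = 0 := by
      have h' : (biprod.fst ≫ biprod.inl + biprod.snd ≫ biprod.inr) ≫ φ =
          biprod.fst ≫ A.arrow + biprod.snd ≫ B.arrow := by
        rw [hφ]
        apply biprod.hom_ext' <;> simp [Preadditive.comp_add]
      calc (k ≫ biprod.fst) ≫ A.arrow + (k ≫ biprod.snd) ≫ B.arrow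
          = k ≫ (biprod.fst ≫ A.arrow + biprod.snd ≫ B.arrow) := by
            simp [Preadditive.comp_add, Category.assoc]
        _ = k ≫ (biprod.fst ≫ biprod.inl + biprod.snd ≫ biprod.inr) ≫ φ := by rw [h']
        _ = k ≫ φ := by rw [biprod.total, Category.id_comp]
        _ = 0 := hkc
    have hAB : (A ⊓ B).Factors ((k ≫ biprod.fst) ≫ A.arrow) := by
      rw [Subobject.inf_factors]
      constructor
      · exact Subobject.factors_comp_arrow _
      · have : (k ≫ biprod.fst) ≫ A.arrow = (-(k ≫ biprod.snd)) ≫ B.arrow := by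
          rw [Preadditive.neg_comp]
          linear_combination (norm := abel) hsum
        rw [this]
        exact Subobject.factors_comp_arrow _
    rw [hinf, Subobject.bot_factors_iff_zero] at hAB
    have h1 : k ≫ biprod.fst = 0 := zero_of_comp_mono A.arrow hAB
    have h2 : k ≫ biprod.snd = 0 := by
      apply zero_of_comp_mono B.arrow
      rw [hAB, zero_add] at hsum
      exact hsum
    apply biprod.hom_ext <;> simpa using by first | exact h1 | exact h2
  haveI : Epi φ := by
    apply CategoryTheory.Abelian.epi_of_cokernel_π_eq_zero
    set c := cokernel.π φ with hc
    have hcc : φ ≫ c = 0 := cokernel.condition φ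
    have hA : A.arrow ≫ c = 0 := by
      rw [← biprod.inl_desc A.arrow B.arrow, ← hφ, Category.assoc, hcc, comp_zero]
    have hB : B.arrow ≫ c = 0 := by
      rw [← biprod.inr_desc A.arrow B.arrow, ← hφ, Category.assoc, hcc, comp_zero]
    have hK : kernelSubobject c = ⊤ :=
      top_le_iff.mp (hsup ▸ sup_le (le_kernelSubobject c A hA) (le_kernelSubobject c B hB))
    haveI : IsIso (kernelSubobject c).arrow := (Subobject.isIso_arrow_iff_eq_top _).mpr hK
    calc c = inv (kernelSubobject c).arrow ≫ ((kernelSubobject c).arrow ≫ c) := by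
          rw [← Category.assoc, IsIso.inv_hom_id, Category.id_comp]
      _ = 0 := by rw [kernelSubobject_arrow_comp, comp_zero]
  exact isIso_of_mono_of_epi φ

/-- Key decomposition: if `W` is simple in `C` but `W.V` is not simple in `R`, then
`W.V ≅ V ⊞ V` for a simple `V`. -/
lemma decomp_of_not_simple (W : CObj R) [Simple W] (hns : ¬ Simple W.V) :
    ∃ V : R, Simple V ∧ Nonempty (W.V ≅ V ⊞ V) := by
  haveI : IsIso W.ι := ⟨-W.ι, by rw [Preadditive.comp_neg, W.hι, neg_neg],
    by rw [Preadditive.neg_comp, W.hι, neg_neg]⟩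
  set ι := W.ι with hι'
  have hι : ι ≫ ι = -𝟙 W.V := W.hι
  have hnz : ¬ IsZero W.V := by
    intro hz
    apply id_nonzero W
    apply CObj.hom_ext
    simpa using hz.eq_of_src (𝟙 W.V) 0
  haveI : Nontrivial (Subobject W.V) := Subobject.nontrivial_of_not_isZero hnz
  have key : ∀ P : Subobject W.V, mSub ι P = P → P = ⊥ ∨ P = ⊤ := by
    intro P hP
    apply stable_bot_or_top W P
    have := Subobject.mk_factors_self (P.arrow ≫ ι)
    rwa [show Subobject.mk (P.arrow ≫ ι) = mSub ι P from rfl, hP] at this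
  obtain ⟨U, hUb, hUt⟩ : ∃ U : Subobject W.V, U ≠ ⊥ ∧ U ≠ ⊤ := by
    by_contra hA
    push_neg at hA
    haveI : IsSimpleOrder (Subobject W.V) := ⟨fun a => or_iff_not_imp_left.mpr (hA a)⟩
    exact hns (simple_of_isSimpleOrder_subobject _)
  have hsup : U ⊔ mSub ι U = ⊤ := by
    rcases key (U ⊔ mSub ι U) (by rw [mSub_sup ι hι, mSub_mSub ι hι, sup_comm]) with h | h
    · exact absurd (le_bot_iff.mp (h ▸ le_sup_left)) hUb
    · exact h
  have hinf : U ⊓ mSub ι U = ⊥ := by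
    rcases key (U ⊓ mSub ι U) (by rw [mSub_inf ι hι, mSub_mSub ι hι, inf_comm]) with h | h
    · exact h
    · exact absurd (top_le_iff.mp (h ▸ inf_le_left)) hUt
  haveI := isIso_desc_of_compl U (mSub ι U) hinf hsup
  refine ⟨(U : R), ?_, ⟨(asIso (biprod.desc U.arrow (mSub ι U).arrow)).symm ≪≫
    biprod.mapIso (Iso.refl _) (Subobject.underlyingIso (U.arrow ≫ ι))⟩⟩
  -- simplicity of U
  have hUnz : ¬ IsZero ((U : R)) := fun hz =>
    hUb ((eq_bot_iff_arrow_eq_zero U).mpr (hz.eq_of_src U.arrow 0))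
  haveI : Nontrivial (Subobject ((U : R))) := Subobject.nontrivial_of_not_isZero hUnz
  haveI : IsSimpleOrder (Subobject ((U : R))) := by
    constructor
    intro P
    rw [or_iff_not_imp_left]
    intro hPb
    set T := Subobject.mk (P.arrow ≫ U.arrow) with hT
    have hTle : T ≤ U := Subobject.mk_le_of_comm P.arrow rfl
    have hTnb : T ≠ ⊥ := by
      intro hzero
      rw [hT, Subobject.mk_eq_bot_iff_zero] at hzero
      exact hPb ((eq_bot_iff_arrow_eq_zero P).mpr (zero_of_comp_mono U.arrow hzero))
    have hTsup : T ⊔ mSub ι T = ⊤ := by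
      rcases key (T ⊔ mSub ι T) (by rw [mSub_sup ι hι, mSub_mSub ι hι, sup_comm]) with h | h
      · exact absurd (le_bot_iff.mp (h ▸ le_sup_left)) hTnb
      · exact h
    have hTinf : T ⊓ mSub ι T = ⊥ :=
      le_bot_iff.mp (hinf ▸ inf_le_inf hTle (mSub_le_mSub ι hTle))
    haveI := isIso_desc_of_compl T (mSub ι T) hTinf hTsup
    set ψ := biprod.desc T.arrow (mSub ι T).arrow with hψdef
    have hψ : biprod.fst ≫ T.arrow + biprod.snd ≫ (mSub ι T).arrow = ψ := by
      rw [hψdef]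
      apply biprod.hom_ext' <;> simp [Preadditive.comp_add]
    set g1 := U.arrow ≫ inv ψ ≫ biprod.fst with hg1
    set g2 := U.arrow ≫ inv ψ ≫ biprod.snd with hg2
    have hdecomp : g1 ≫ T.arrow + g2 ≫ (mSub ι T).arrow = U.arrow := by
      have : U.arrow ≫ inv ψ ≫ (biprod.fst ≫ T.arrow + biprod.snd ≫ (mSub ι T).arrow)
          = U.arrow := by rw [hψ, IsIso.inv_hom_id, Category.comp_id]
      simpa [hg1, hg2, Preadditive.comp_add, Category.assoc] using this
    have hfac2 : U.Factors (g2 ≫ (mSub ι T).arrow) := by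
      have heq : g2 ≫ (mSub ι T).arrow = U.arrow - g1 ≫ T.arrow := by
        linear_combination (norm := abel) hdecomp
      rw [heq]
      exact factors_sub (Subobject.factors_self U)
        (Subobject.factors_of_factors_right g1
          (Subobject.factors_of_le T.arrow hTle (Subobject.factors_self T)))
    have hfacm : (mSub ι U).Factors (g2 ≫ (mSub ι T).arrow) :=
      Subobject.factors_of_le _ (mSub_le_mSub ι hTle)
        (Subobject.factors_comp_arrow _)
    have hz : g2 ≫ (mSub ι T).arrow = 0 := by
      have := (Subobject.inf_factors _).mpr ⟨hfac2, hfacm⟩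
      rwa [hinf, Subobject.bot_factors_iff_zero] at this
    have hUleT : U ≤ T := by
      apply Subobject.le_of_comm g1
      rw [hz, add_zero] at hdecomp
      exact hdecomp
    -- now P = ⊤
    have hfacU : T.Factors U.arrow :=
      Subobject.factors_of_le U.arrow hUleT (Subobject.factors_self U)
    set r := T.factorThru U.arrow hfacU ≫ (Subobject.underlyingIso (P.arrow ≫ U.arrow)).hom
      with hr
    have hrar : r ≫ P.arrow ≫ U.arrow = U.arrow := by
      rw [hr, Category.assoc, Subobject.underlyingIso_hom_comp_eq_mk]
      exact T.factorThru_arrow _ _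
    have hr1 : r ≫ P.arrow = 𝟙 ((U : R)) := by
      rw [← cancel_mono U.arrow, Category.assoc, hrar, Category.id_comp]
    have hr2 : P.arrow ≫ r = 𝟙 _ := by
      rw [← cancel_mono P.arrow, Category.assoc, hr1, Category.comp_id, Category.id_comp]
    haveI : IsIso P.arrow := ⟨r, hr2, hr1⟩
    exact Subobject.eq_top_of_isIso_arrow P
  exact simple_of_isSimpleOrder_subobject _

lemma not_simple_biprod {V : R} (hV : Simple V) : ¬ Simple (V ⊞ V) := by
  intro h
  rcases (indecomposable_of_simple (V ⊞ V)).2 V V (Iso.refl _) with h' | h' <;>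
    exact (@Simple.not_isZero _ _ _ V hV) h'

end Statement11Aux

theorem statement11
    (hfin : ∀ V : R, Simple V → FiniteDimensional ℝ (V ⟶ V)) (W : CObj R) [Simple W] :
    ((∃ V : R, Simple V ∧ Nonempty ((Ffunctor R).obj W ≅ V ⊞ V)) ∧
      ¬(Simple ((Ffunctor R).obj W) ∧ ¬Nonempty (W ≅ (Bfunctor R).obj W)) ∧
      ¬(Simple ((Ffunctor R).obj W) ∧ Nonempty (W ≅ (Bfunctor R).obj W))) ∨
    (¬(∃ V : R, Simple V ∧ Nonempty ((Ffunctor R).obj W ≅ V ⊞ V)) ∧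
      (Simple ((Ffunctor R).obj W) ∧ ¬Nonempty (W ≅ (Bfunctor R).obj W)) ∧
      ¬(Simple ((Ffunctor R).obj W) ∧ Nonempty (W ≅ (Bfunctor R).obj W))) ∨
    (¬(∃ V : R, Simple V ∧ Nonempty ((Ffunctor R).obj W ≅ V ⊞ V)) ∧
      ¬(Simple ((Ffunctor R).obj W) ∧ ¬Nonempty (W ≅ (Bfunctor R).obj W)) ∧
      (Simple ((Ffunctor R).obj W) ∧ Nonempty (W ≅ (Bfunctor R).obj W))) := by
  by_cases hQ : Simple ((Ffunctor R).obj W)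
  · by_cases hS : Nonempty (W ≅ (Bfunctor R).obj W)
    · refine Or.inr (Or.inr ⟨?_, ?_, hQ, hS⟩)
      · rintro ⟨V, hV, ⟨e⟩⟩
        haveI := hQ
        exact not_simple_biprod hV (Simple.of_iso e.symm)
      · rintro ⟨_, hn⟩; exact hn hS
    · refine Or.inr (Or.inl ⟨?_, ⟨hQ, hS⟩, ?_⟩)
      · rintro ⟨V, hV, ⟨e⟩⟩
        haveI := hQ
        exact not_simple_biprod hV (Simple.of_iso e.symm)
      · rintro ⟨_, hn⟩; exact hS hn
  · exact Or.inl ⟨decomp_of_not_simple W hQ, fun h => hQ h.1, fun h => hQ h.1⟩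
end

section
/- For a simple object W of C, let Φ(W) denote a simple object of R determined (up to isomorphism) as follows: Φ(W) := F(W) if F(W) is simple, and Φ(W) := V if F(W) ≅ V ⊕ V with V simple. Then Φ induces a bijection from the set of isomorphism classes of simple objects of C modulo the action of B onto the set of isomorphism classes of simple objects of R; that is: (a) for simple objects W, W' of C, Φ(W) ≅ Φ(W') in R if and only if W ≅ W' or W ≅ B(W') in C; (b) every simple object V of R is isomorphic to Φ(W) for some simple object W of C. -/
set_option linter.unusedSectionVars false

open CategoryTheory CategoryTheory.Limits

universe v u

variable (R : Type u) [Category.{v} R] [Abelian R] [CategoryTheory.Linear ℝ R]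

variable {R}

variable (R)

variable {R}

/-- `V` represents the isomorphism class `Φ([W])` of the simple object `W` of `C`. -/
noncomputable def IsPhi {R : Type u} [Category.{v} R] [Abelian R] [CategoryTheory.Linear ℝ R] (W : CObj R) (V : R) : Prop :=
  Simple V ∧
    ((Simple ((Ffunctor R).obj W) ∧ Nonempty ((Ffunctor R).obj W ≅ V)) ∨
      (¬Simple ((Ffunctor R).obj W) ∧ Nonempty ((Ffunctor R).obj W ≅ V ⊞ V)))


section Proof

variable {R : Type u} [Category.{v} R] [Abelian R] [CategoryTheory.Linear ℝ R]

namespace CPf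

/-- A morphism of `C` whose underlying morphism is an isomorphism is an isomorphism. -/
lemma isIso_of_val {W₁ W₂ : CObj R} (f : W₁ ⟶ W₂) (h : IsIso f.1) : IsIso f := by
  haveI := h
  refine ⟨⟨⟨inv f.1, ?_⟩, ?_, ?_⟩⟩
  · rw [← cancel_mono f.1]
    simp [f.2]
  · apply CObj.hom_ext; simp
  · apply CObj.hom_ext; simp

/-- The underlying morphism of an isomorphism of `C` is an isomorphism. -/
lemma isIso_val {W₁ W₂ : CObj R} (f : W₁ ⟶ W₂) (h : IsIso f) : IsIso f.1 := by
  haveI := h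
  exact ⟨(inv f).1, congrArg Subtype.val (IsIso.hom_inv_id f),
    congrArg Subtype.val (IsIso.inv_hom_id f)⟩

/-- The underlying morphism of a monomorphism of `C` is a monomorphism. -/
lemma mono_val {W₁ W₂ : CObj R} (f : W₁ ⟶ W₂) [Mono f] : Mono f.1 := by
  constructor
  intro Z h₁ h₂ hyp
  let EZ : CObj R := ⟨Z ⊞ Z, -(biprod.snd ≫ biprod.inl) + biprod.fst ≫ biprod.inr,
    by ext <;> simp⟩
  have key : ∀ h : Z ⟶ W₁.V,
      EZ.ι ≫ biprod.desc h (h ≫ W₁.ι) = biprod.desc h (h ≫ W₁.ι) ≫ W₁.ι := by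
    intro h
    ext
    · simp [EZ]
    · simp [EZ, W₁.hι]
  have heq : (⟨biprod.desc h₁ (h₁ ≫ W₁.ι), key h₁⟩ : EZ ⟶ W₁) ≫ f =
      (⟨biprod.desc h₂ (h₂ ≫ W₁.ι), key h₂⟩ : EZ ⟶ W₁) ≫ f := by
    apply CObj.hom_ext
    show biprod.desc h₁ (h₁ ≫ W₁.ι) ≫ f.1 = biprod.desc h₂ (h₂ ≫ W₁.ι) ≫ f.1
    ext
    · simpa using hyp
    · have : h₁ ≫ W₁.ι ≫ f.1 = h₂ ≫ W₁.ι ≫ f.1 := by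
        rw [f.2, reassoc_of% hyp]
      simpa using this
  have := congrArg (fun t => biprod.inl ≫ t.1) ((cancel_mono f).mp heq)
  simpa using this

/-- A morphism of `C` whose underlying morphism is a monomorphism is a monomorphism. -/
lemma mono_of_val {W₁ W₂ : CObj R} (f : W₁ ⟶ W₂) (h : Mono f.1) : Mono f := by
  constructor
  intro Z g₁ g₂ hyp
  apply CObj.hom_ext
  have hyp' : g₁.1 ≫ f.1 = g₂.1 ≫ f.1 := congrArg Subtype.val hyp
  exact (cancel_mono f.1).mp hyp'

/-- A nonzero morphism of `C` out of a simple object has monic underlying morphism. -/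
lemma mono_val_of_ne_zero {W₁ W₂ : CObj R} (hs : Simple W₁) {f : W₁ ⟶ W₂} (hf : f ≠ 0) :
    Mono f.1 := by
  have h1 : (kernel.ι f.1 ≫ W₁.ι) ≫ f.1 = 0 := by
    rw [Category.assoc, f.2, ← Category.assoc, kernel.condition, zero_comp]
  have hlift : kernel.lift f.1 (kernel.ι f.1 ≫ W₁.ι) h1 ≫ kernel.ι f.1 =
      kernel.ι f.1 ≫ W₁.ι := kernel.lift_ι _ _ _
  have hKι : kernel.lift f.1 (kernel.ι f.1 ≫ W₁.ι) h1 ≫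
      kernel.lift f.1 (kernel.ι f.1 ≫ W₁.ι) h1 = -𝟙 (kernel f.1) := by
    rw [← cancel_mono (kernel.ι f.1)]
    rw [Category.assoc, hlift, ← Category.assoc, hlift, Category.assoc, W₁.hι]
    simp
  let KC : CObj R := ⟨kernel f.1, kernel.lift f.1 (kernel.ι f.1 ≫ W₁.ι) h1, hKι⟩
  let kC : KC ⟶ W₁ := ⟨kernel.ι f.1, hlift⟩
  haveI : Mono kC := mono_of_val kC (by show Mono (kernel.ι f.1); infer_instance)
  by_cases hk : kC = 0
  · have : kernel.ι f.1 = 0 := congrArg Subtype.val hk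
    exact Preadditive.mono_of_kernel_zero this
  · haveI := (hs.mono_isIso_iff_nonzero kC).mpr hk
    haveI : IsIso (kernel.ι f.1) := isIso_val kC ‹_›
    exfalso
    apply hf
    apply CObj.hom_ext
    show f.1 = 0
    rw [← IsIso.inv_hom_id_assoc (kernel.ι f.1) f.1, kernel.condition, comp_zero]

/-- Schur's lemma in `C`. -/
lemma isIso_of_ne_zero {W₁ W₂ : CObj R} (h1 : Simple W₁) (h2 : Simple W₂) (f : W₁ ⟶ W₂)
    (hf : f ≠ 0) : IsIso f := by
  haveI := mono_of_val f (mono_val_of_ne_zero h1 hf)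
  exact (h2.mono_isIso_iff_nonzero f).mpr hf

/-- Decomposition of a morphism of `R` into `C`-linear and `C`-antilinear parts. -/
lemma decompose {W W' : CObj R} (φ : W.V ⟶ W'.V) (hφ : φ ≠ 0) :
    (∃ ψ : W ⟶ W', ψ ≠ 0) ∨ (∃ ψ : W ⟶ (Bfunctor R).obj W', ψ ≠ 0) := by
  have hkey : W.ι ≫ (φ - W.ι ≫ φ ≫ W'.ι) = (φ - W.ι ≫ φ ≫ W'.ι) ≫ W'.ι := by
    simp only [Preadditive.comp_sub, Preadditive.sub_comp, Category.assoc,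
      reassoc_of% W.hι, W'.hι, Preadditive.neg_comp, Preadditive.comp_neg,
      Category.id_comp, Category.comp_id, sub_neg_eq_add]
    abel
  have hkey' : W.ι ≫ (φ + W.ι ≫ φ ≫ W'.ι) = (φ + W.ι ≫ φ ≫ W'.ι) ≫ ((Bfunctor R).obj W').ι := by
    show W.ι ≫ (φ + W.ι ≫ φ ≫ W'.ι) = (φ + W.ι ≫ φ ≫ W'.ι) ≫ (-W'.ι)
    simp only [Preadditive.comp_add, Preadditive.add_comp, Category.assoc,
      reassoc_of% W.hι, W'.hι, Preadditive.neg_comp, Preadditive.comp_neg,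
      Category.id_comp, Category.comp_id]
    abel
  have hp : W.ι ≫ ((2⁻¹ : ℝ) • (φ - W.ι ≫ φ ≫ W'.ι)) =
      ((2⁻¹ : ℝ) • (φ - W.ι ≫ φ ≫ W'.ι)) ≫ W'.ι := by
    rw [Linear.comp_smul, Linear.smul_comp, hkey]
  have hm : W.ι ≫ ((2⁻¹ : ℝ) • (φ + W.ι ≫ φ ≫ W'.ι)) =
      ((2⁻¹ : ℝ) • (φ + W.ι ≫ φ ≫ W'.ι)) ≫ ((Bfunctor R).obj W').ι := by
    show W.ι ≫ ((2⁻¹ : ℝ) • (φ + W.ι ≫ φ ≫ W'.ι)) = ((2⁻¹ : ℝ) • (φ + W.ι ≫ φ ≫ W'.ι)) ≫ (-W'.ι)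
    rw [Linear.comp_smul, Linear.smul_comp]
    exact congrArg _ hkey'
  by_cases hp0 : (2⁻¹ : ℝ) • (φ - W.ι ≫ φ ≫ W'.ι) = 0
  · right
    refine ⟨⟨(2⁻¹ : ℝ) • (φ + W.ι ≫ φ ≫ W'.ι), hm⟩, ?_⟩
    intro h0
    have h1 : (2⁻¹ : ℝ) • (φ + W.ι ≫ φ ≫ W'.ι) = 0 := congrArg Subtype.val h0
    apply hφ
    have : ((2⁻¹ : ℝ) • (φ - W.ι ≫ φ ≫ W'.ι)) + ((2⁻¹ : ℝ) • (φ + W.ι ≫ φ ≫ W'.ι)) = φ := by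
      module
    rw [← this, hp0, h1, add_zero]
  · left
    exact ⟨⟨(2⁻¹ : ℝ) • (φ - W.ι ≫ φ ≫ W'.ι), hp⟩, fun h0 => hp0 (congrArg Subtype.val h0)⟩

/-- It is impossible that a simple object of `C` has underlying object `V ⊞ V`
when `V` carries a complex structure. -/
lemma noMix {V : R} (hV : Simple V) (ι₀ : V ⟶ V) (hι₀ : ι₀ ≫ ι₀ = -𝟙 V)
    {W' : CObj R} (hW' : Simple W') (e : W'.V ≅ V ⊞ V) : False := by
  haveI := hV
  have hφ : e.hom ≫ biprod.fst ≠ 0 := by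
    intro h
    have h2 : (biprod.fst : V ⊞ V ⟶ V) = 0 := by
      rw [← Iso.inv_hom_id_assoc e biprod.fst, h, comp_zero]
    apply id_nonzero V
    rw [← biprod.inl_fst (X := V) (Y := V), h2, comp_zero]
  have key : ∀ (m : W'.V ⟶ V), m ≠ 0 → Mono m → False := by
    intro m hm0 hmono
    haveI := hmono
    have hγ : Mono (e.inv ≫ m) := by infer_instance
    have hmono2 : ∀ (ξ : V ⟶ V ⊞ V), Mono ξ → Mono (ξ ≫ e.inv ≫ m) := by
      intro ξ hξ; haveI := hξ; infer_instance
    have hiso : ∀ (ξ : V ⟶ V ⊞ V), Mono ξ → IsIso (ξ ≫ e.inv ≫ m) := by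
      intro ξ hξ
      haveI := hmono2 ξ hξ
      refine (hV.mono_isIso_iff_nonzero _).mpr ?_
      intro h0
      apply id_nonzero V
      exact (cancel_mono (ξ ≫ e.inv ≫ m)).mp (by simp [h0])
    haveI hα := hiso biprod.inl inferInstance
    haveI hβ := hiso biprod.inr inferInstance
    set α := biprod.inl ≫ e.inv ≫ m with hαdef
    set β := biprod.inr ≫ e.inv ≫ m with hβdef
    have hd : biprod.lift (𝟙 V) (-(α ≫ inv β)) ≫ (e.inv ≫ m) = 0 := by
      simp only [biprod.lift_eq, Preadditive.add_comp, Preadditive.neg_comp,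
        Category.assoc, Category.id_comp, ← hαdef, ← hβdef, IsIso.inv_hom_id,
        IsIso.inv_hom_id_assoc, Category.comp_id]
      simp
    have hd0 : biprod.lift (𝟙 V) (-(α ≫ inv β)) = 0 :=
      (cancel_mono (e.inv ≫ m)).mp (by rw [hd, zero_comp])
    apply id_nonzero V
    rw [← biprod.lift_fst (𝟙 V) (-(α ≫ inv β)), hd0, zero_comp]
  rcases decompose (W := W') (W' := ⟨V, ι₀, hι₀⟩) (e.hom ≫ biprod.fst) hφ with
    ⟨ψ, hψ⟩ | ⟨ψ, hψ⟩
  · exact key ψ.1 (fun h => hψ (CObj.hom_ext h)) (mono_val_of_ne_zero hW' hψ)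
  · exact key ψ.1 (fun h => hψ (CObj.hom_ext h)) (mono_val_of_ne_zero hW' hψ)

/-- Conjugation preserves simplicity. -/
lemma simple_B {W : CObj R} (hW : Simple W) : Simple ((Bfunctor R).obj W) := by
  constructor
  intro Y f hm
  haveI := hm
  have hcond : ((Bfunctor R).obj Y).ι ≫ f.1 = f.1 ≫ W.ι := by
    show (-Y.ι) ≫ f.1 = f.1 ≫ W.ι
    have h2 : Y.ι ≫ f.1 = -(f.1 ≫ W.ι) := f.2.trans (Preadditive.comp_neg _ _)
    rw [Preadditive.neg_comp, h2]
    exact neg_neg _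
  let f' : (Bfunctor R).obj Y ⟶ W := ⟨f.1, hcond⟩
  haveI hmv : Mono f.1 := mono_val f
  haveI : Mono f' := mono_of_val f' hmv
  have h1 : IsIso f ↔ IsIso f' := by
    constructor
    · intro h; exact isIso_of_val f' (isIso_val f h)
    · intro h; exact isIso_of_val f (isIso_val f' h)
  have h2 : f ≠ 0 ↔ f' ≠ 0 := by
    constructor
    · intro h h0
      apply h; apply CObj.hom_ext
      have h3 : f'.1 = (0 : (Bfunctor R).obj Y ⟶ W).1 := congrArg Subtype.val h0
      exact h3
    · intro h h0
      apply h; apply CObj.hom_ext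
      have h3 : f.1 = (0 : Y ⟶ (Bfunctor R).obj W).1 := congrArg Subtype.val h0
      exact h3
  rw [h1, h2]
  exact hW.mono_isIso_iff_nonzero f'

/-- Main dichotomy: simple objects with isomorphic underlying objects
are isomorphic or conjugate-isomorphic. -/
lemma iso_or_iso_B {W W' : CObj R} (hW : Simple W) (hW' : Simple W') (e : W.V ≅ W'.V) :
    Nonempty (W ≅ W') ∨ Nonempty (W ≅ (Bfunctor R).obj W') := by
  haveI := hW
  have he : e.hom ≠ 0 := by
    intro h
    have h1 : 𝟙 W.V = 0 := by rw [← e.hom_inv_id, h, zero_comp]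
    exact id_nonzero W (CObj.hom_ext (by simpa using h1))
  rcases decompose e.hom he with ⟨ψ, hψ⟩ | ⟨ψ, hψ⟩
  · haveI := isIso_of_ne_zero hW hW' ψ hψ
    exact Or.inl ⟨asIso ψ⟩
  · haveI := isIso_of_ne_zero hW (simple_B hW') ψ hψ
    exact Or.inr ⟨asIso ψ⟩

/-- An object of `C` with simple underlying object is simple. -/
lemma simple_of_simple_val {W : CObj R} (hV : Simple W.V) : Simple W := by
  constructor
  intro Y f hm
  haveI := hm
  haveI hmv : Mono f.1 := mono_val f
  constructor
  · intro h h0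
    haveI := h
    have h1 : f.1 = 0 := congrArg Subtype.val h0
    haveI := isIso_val f h
    haveI := hV
    apply id_nonzero W.V
    calc 𝟙 W.V = inv f.1 ≫ f.1 := (IsIso.inv_hom_id f.1).symm
    _ = inv f.1 ≫ 0 := congrArg (fun t => inv f.1 ≫ t) h1
    _ = 0 := comp_zero
  · intro h
    have h1 : f.1 ≠ 0 := fun h0 => h (CObj.hom_ext h0)
    exact isIso_of_val f ((hV.mono_isIso_iff_nonzero f.1).mpr h1)

lemma not_simple_biprod {V : R} (hV : Simple V) : ¬Simple (V ⊞ V) := by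
  haveI := hV
  intro hS
  have h1 : (biprod.inl : V ⟶ V ⊞ V) ≠ 0 := by
    intro h
    apply id_nonzero V
    rw [← biprod.inl_fst (X := V) (Y := V), h, zero_comp]
  haveI := (hS.mono_isIso_iff_nonzero biprod.inl).mpr h1
  have h2 : (biprod.snd : V ⊞ V ⟶ V) = 0 := by
    rw [← IsIso.inv_hom_id_assoc (biprod.inl : V ⟶ V ⊞ V) biprod.snd, biprod.inl_snd, comp_zero]
  apply id_nonzero V
  rw [← biprod.inr_snd (X := V) (Y := V), h2, comp_zero]

lemma component_iso {V V' : R} (hV : Simple V) (hV' : Simple V') (e : V ⊞ V ≅ V' ⊞ V') :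
    Nonempty (V ≅ V') := by
  haveI := hV; haveI := hV'
  by_cases h1 : biprod.inl ≫ e.hom ≫ biprod.fst ≠ 0
  · haveI := isIso_of_hom_simple h1
    exact ⟨asIso (biprod.inl ≫ e.hom ≫ biprod.fst)⟩
  by_cases h2 : biprod.inl ≫ e.hom ≫ biprod.snd ≠ 0
  · haveI := isIso_of_hom_simple h2
    exact ⟨asIso (biprod.inl ≫ e.hom ≫ biprod.snd)⟩
  exfalso
  push_neg at h1 h2
  have h3 : biprod.inl ≫ e.hom = 0 := by
    apply biprod.hom_ext
    · rw [Category.assoc, h1, zero_comp]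
    · rw [Category.assoc, h2, zero_comp]
  have h4 : (biprod.inl : V ⟶ V ⊞ V) = 0 := by
    rw [← Category.comp_id (biprod.inl : V ⟶ V ⊞ V), ← e.hom_inv_id, ← Category.assoc, h3,
      zero_comp]
  apply id_nonzero V
  rw [← biprod.inl_fst (X := V) (Y := V), h4, zero_comp]

/-- The complexification of `V`. -/
@[reducible]
noncomputable def EObj (V : R) : CObj R :=
  ⟨V ⊞ V, -(biprod.snd ≫ biprod.inl) + biprod.fst ≫ biprod.inr, by ext <;> simp⟩

lemma simple_EObj {V : R} (hV : Simple V) (hB : ∀ ι₀ : V ⟶ V, ι₀ ≫ ι₀ ≠ -𝟙 V) :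
    Simple (EObj V) := by
  haveI := hV
  have hinlJ : biprod.inl ≫ (EObj V).ι = biprod.inr := by simp [EObj]
  have hJ2 : (EObj V).ι ≫ (EObj V).ι = -𝟙 (V ⊞ V) := (EObj V).hι
  constructor
  intro Y g hm
  haveI := hm
  constructor
  · intro hiso h0
    haveI := hiso
    have h1 : (𝟙 (EObj V) : EObj V ⟶ EObj V) = 0 := by
      calc (𝟙 (EObj V) : EObj V ⟶ EObj V) = inv g ≫ g := (IsIso.inv_hom_id g).symm
      _ = inv g ≫ 0 := congrArg (fun t => inv g ≫ t) h0
      _ = 0 := comp_zero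
    have h2 : 𝟙 (V ⊞ V) = 0 := congrArg Subtype.val h1
    apply id_nonzero V
    calc 𝟙 V = biprod.inl ≫ biprod.fst := biprod.inl_fst.symm
    _ = biprod.inl ≫ 𝟙 (V ⊞ V) ≫ biprod.fst := by rw [Category.id_comp]
    _ = biprod.inl ≫ 0 ≫ biprod.fst := by rw [h2]
    _ = 0 := by rw [zero_comp, comp_zero]
  · intro hg0
    haveI hm1 : Mono g.1 := mono_val g
    apply isIso_of_val
    have hm0 : g.1 ≠ 0 := fun h => hg0 (CObj.hom_ext h)
    have hepi : Epi g.1 := by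
      by_contra hne
      have hcomm : Y.ι ≫ g.1 = g.1 ≫ (EObj V).ι := g.2
      have hJQcond : g.1 ≫ (EObj V).ι ≫ cokernel.π g.1 = 0 := by
        rw [← Category.assoc, ← hcomm, Category.assoc, cokernel.condition, comp_zero]
      set q := cokernel.π g.1 with hqdef
      set JQ := cokernel.desc g.1 ((EObj V).ι ≫ q) hJQcond with hJQdef
      have hqJQ : q ≫ JQ = (EObj V).ι ≫ q := cokernel.π_desc _ _ _
      have hJQ2 : JQ ≫ JQ = -𝟙 (cokernel g.1) := by
        rw [← cancel_epi q, ← Category.assoc, hqJQ, Category.assoc, hqJQ, ← Category.assoc,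
          hJ2]
        simp
      have hQ : (𝟙 (cokernel g.1) : _) ≠ 0 := by
        intro h
        apply hne
        apply Preadditive.epi_of_cokernel_zero
        rw [show cokernel.π g.1 = q ≫ 𝟙 (cokernel g.1) from by rw [Category.comp_id], h,
          comp_zero]
      set v := biprod.inl ≫ q with hvdef
      have hinrq : biprod.inr ≫ q = v ≫ JQ := by
        rw [hvdef, Category.assoc, hqJQ, ← Category.assoc, hinlJ]
      have hv0 : v ≠ 0 := by
        intro h
        apply hQ
        have hq0 : q = 0 := by
          apply biprod.hom_ext'
          · rw [← hvdef, h, comp_zero]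
          · rw [hinrq, h, zero_comp, comp_zero]
        rw [← cancel_epi q, hq0, zero_comp, comp_zero]
      haveI hvmono : Mono v := mono_of_nonzero_from_simple hv0
      by_cases hvepi : Epi v
      · haveI := hvepi
        haveI : IsIso v := isIso_of_mono_of_epi v
        apply hB (v ≫ JQ ≫ inv v)
        simp only [Category.assoc, IsIso.inv_hom_id_assoc]
        rw [reassoc_of% hJQ2]
        simp only [Preadditive.neg_comp, Category.id_comp, Preadditive.comp_neg]
        rw [IsIso.hom_inv_id]
      · set c := cokernel.π v with hcdef
        have hvc : v ≫ c = 0 := cokernel.condition v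
        have hQ' : (𝟙 (cokernel v) : _) ≠ 0 := by
          intro h
          apply hvepi
          apply Preadditive.epi_of_cokernel_zero
          rw [show cokernel.π v = c ≫ 𝟙 (cokernel v) from by rw [Category.comp_id], h,
            comp_zero]
        set w := v ≫ JQ ≫ c with hwdef
        have hw0 : w ≠ 0 := by
          intro h
          apply hQ'
          have hqc : q ≫ c = 0 := by
            apply biprod.hom_ext'
            · rw [← Category.assoc, ← hvdef, hvc, comp_zero]
            · rw [← Category.assoc, hinrq, Category.assoc, ← hwdef, h, comp_zero]
          rw [← cancel_epi c, ← cancel_epi q, ← Category.assoc, hqc, zero_comp, comp_zero,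
            comp_zero]
        have hic : biprod.inl ≫ q ≫ c = 0 := by
          rw [← Category.assoc, ← hvdef, hvc]
        have hirc : biprod.inr ≫ q ≫ c = w := by
          rw [← Category.assoc, hinrq, Category.assoc, ← hwdef]
        have hwepi : Epi w := by
          constructor
          intro T h₁ h₂ hh
          haveI : Epi (q ≫ c) := epi_comp q c
          apply (cancel_epi (q ≫ c)).mp
          apply biprod.hom_ext'
          · rw [← Category.assoc, ← Category.assoc, ← Category.assoc]
            rw [Category.assoc biprod.inl q c, hic, zero_comp, zero_comp]
          · rw [← Category.assoc, ← Category.assoc, ← Category.assoc]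
            rw [Category.assoc biprod.inr q c, hirc, hh]
        haveI hwmono : Mono w := mono_of_nonzero_from_simple hw0
        haveI : IsIso w := isIso_of_mono_of_epi w
        have hrcond : (𝟙 (cokernel g.1) - c ≫ inv w ≫ v ≫ JQ) ≫ cokernel.π v = 0 := by
          rw [← hcdef, Preadditive.sub_comp, Category.id_comp, Category.assoc,
            Category.assoc, Category.assoc, ← hwdef, IsIso.inv_hom_id, Category.comp_id,
            sub_self]
        set r := Abelian.monoLift v (𝟙 (cokernel g.1) - c ≫ inv w ≫ v ≫ JQ) hrcond
          with hrdef
        have hrv : r ≫ v = 𝟙 (cokernel g.1) - c ≫ inv w ≫ v ≫ JQ :=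
          Abelian.monoLift_comp v _ hrcond
        have hvr : v ≫ r = 𝟙 V := by
          rw [← cancel_mono v, Category.assoc, hrv, Preadditive.comp_sub, Category.comp_id,
            ← Category.assoc, hvc, zero_comp, sub_zero, Category.id_comp]
        set θ := biprod.lift r (c ≫ inv w) with hθdef
        set τ := v ≫ JQ ≫ r with hτdef
        set N := 𝟙 (V ⊞ V) - biprod.snd ≫ τ ≫ biprod.inl with hNdef
        have hvθ : v ≫ θ = biprod.inl := by
          apply biprod.hom_ext
          · rw [hθdef, Category.assoc, biprod.lift_fst, hvr, biprod.inl_fst]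
          · rw [hθdef, Category.assoc, biprod.lift_snd, ← Category.assoc, hvc, zero_comp,
              biprod.inl_snd]
        have hvJθ : (v ≫ JQ) ≫ θ = biprod.lift τ (𝟙 V) := by
          apply biprod.hom_ext
          · rw [hθdef, Category.assoc, biprod.lift_fst, biprod.lift_fst, Category.assoc,
              ← hτdef]
          · rw [hθdef, Category.assoc, biprod.lift_snd, biprod.lift_snd]
            rw [show (v ≫ JQ) ≫ c ≫ inv w = (v ≫ JQ ≫ c) ≫ inv w from by
              simp only [Category.assoc]]
            rw [← hwdef, IsIso.hom_inv_id]
        have hsec : q ≫ θ ≫ N = 𝟙 (V ⊞ V) := by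
          apply biprod.hom_ext'
          · rw [← Category.assoc, ← Category.assoc, ← hvdef, hvθ, hNdef,
              Preadditive.comp_sub, Category.comp_id, ← Category.assoc, biprod.inl_snd,
              zero_comp, sub_zero]
          · rw [← Category.assoc, ← Category.assoc, hinrq, hvJθ, hNdef,
              Preadditive.comp_sub, Category.comp_id, ← Category.assoc, biprod.lift_snd,
              Category.id_comp]
            apply biprod.hom_ext
            · rw [Preadditive.sub_comp, biprod.lift_fst, Category.assoc, biprod.inl_fst,
                Category.comp_id, sub_self]
              simp
            · rw [Preadditive.sub_comp, biprod.lift_snd, Category.assoc, biprod.inl_snd,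
                comp_zero, sub_zero]
              simp
        haveI : IsSplitMono q := IsSplitMono.mk' ⟨θ ≫ N, hsec⟩
        apply hm0
        apply (cancel_mono q).mp
        rw [zero_comp]
        exact cokernel.condition g.1
    exact isIso_of_mono_of_epi g.1

end CPf

end Proof


open scoped TensorProduct Quaternion

variable [EssentiallySmall.{v} R]

theorem statement12 [EssentiallySmall.{v} R]
    (hfin : ∀ V : R, Simple V → FiniteDimensional ℝ (V ⟶ V)) :
    (∀ (W W' : CObj R), Simple W → Simple W' → ∀ V V' : R,
        IsPhi W V → IsPhi W' V' →
        (Nonempty (V ≅ V') ↔ (Nonempty (W ≅ W') ∨ Nonempty (W ≅ (Bfunctor R).obj W')))) ∧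
    (∀ V : R, Simple V → ∃ W : CObj R, Simple W ∧ IsPhi W V) := by
  constructor
  · intro W W' hW hW' V V' hphi hphi'
    obtain ⟨hV, hbr⟩ := hphi
    obtain ⟨hV', hbr'⟩ := hphi'
    constructor
    · rintro ⟨e⟩
      rcases hbr with ⟨hs, ⟨e₁⟩⟩ | ⟨hn, ⟨e₁⟩⟩ <;> rcases hbr' with ⟨hs', ⟨e₂⟩⟩ | ⟨hn', ⟨e₂⟩⟩
      · exact CPf.iso_or_iso_B hW hW' (e₁ ≪≫ e ≪≫ e₂.symm)
      · exfalso
        dsimp only [Ffunctor] at e₁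
        refine CPf.noMix hV' ((e₁ ≪≫ e).inv ≫ W.ι ≫ (e₁ ≪≫ e).hom) ?_ hW' e₂
        simp only [Category.assoc, Iso.hom_inv_id_assoc, reassoc_of% W.hι,
          Preadditive.neg_comp, Preadditive.comp_neg, Category.id_comp, Iso.inv_hom_id]
      · exfalso
        dsimp only [Ffunctor] at e₂
        refine CPf.noMix hV ((e₂ ≪≫ e.symm).inv ≫ W'.ι ≫ (e₂ ≪≫ e.symm).hom) ?_ hW e₁
        simp only [Category.assoc, Iso.hom_inv_id_assoc, reassoc_of% W'.hι,
          Preadditive.neg_comp, Preadditive.comp_neg, Category.id_comp, Iso.inv_hom_id]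
      · exact CPf.iso_or_iso_B hW hW' (e₁ ≪≫ biprod.mapIso e e ≪≫ e₂.symm)
    · intro h
      have eR : Nonempty (((Ffunctor R).obj W : R) ≅ (Ffunctor R).obj W') := by
        rcases h with he | he
        · obtain ⟨e⟩ := he
          exact ⟨⟨e.hom.1, e.inv.1, congrArg Subtype.val e.hom_inv_id,
            congrArg Subtype.val e.inv_hom_id⟩⟩
        · obtain ⟨e⟩ := he
          exact ⟨⟨e.hom.1, e.inv.1, congrArg Subtype.val e.hom_inv_id,
            congrArg Subtype.val e.inv_hom_id⟩⟩
      obtain ⟨eR⟩ := eR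
      rcases hbr with ⟨hs, ⟨e₁⟩⟩ | ⟨hn, ⟨e₁⟩⟩ <;> rcases hbr' with ⟨hs', ⟨e₂⟩⟩ | ⟨hn', ⟨e₂⟩⟩
      · exact ⟨e₁.symm ≪≫ eR ≪≫ e₂⟩
      · haveI := hs
        exact absurd (Simple.of_iso eR.symm) hn'
      · haveI := hs'
        exact absurd (Simple.of_iso eR) hn
      · exact CPf.component_iso hV hV' (e₁.symm ≪≫ eR ≪≫ e₂)
  · intro V hV
    by_cases hc : ∃ ι₀ : V ⟶ V, ι₀ ≫ ι₀ = -𝟙 V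
    · obtain ⟨ι₀, hι₀⟩ := hc
      exact ⟨⟨V, ι₀, hι₀⟩, CPf.simple_of_simple_val hV, hV, Or.inl ⟨hV, ⟨Iso.refl V⟩⟩⟩
    · push_neg at hc
      exact ⟨CPf.EObj V, CPf.simple_EObj hV hc, hV,
        Or.inr ⟨CPf.not_simple_biprod hV, ⟨Iso.refl (V ⊞ V)⟩⟩⟩
end

section
/- Let g be a finite-dimensional Lie algebra over ℂ and let r be its solvable radical. Then the solvable radical of the quotient Lie algebra g/⁅g, r⁆ equals the center of g/⁅g, r⁆; in particular, g/⁅g, r⁆ is a reductive Lie algebra. -/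
open LieAlgebra

section Aux

variable {R L : Type*} [CommRing R] [LieRing L] [LieAlgebra R L]

/-- The quotient map onto the quotient by a Lie ideal, as a morphism of Lie algebras. -/
def lieQuotMk (I : LieIdeal R L) : L →ₗ⁅R⁆ L ⧸ I :=
  { (LieSubmodule.Quotient.mk' I).toLinearMap with
    map_lie' := fun {_ _} => rfl }

lemma lieQuotMk_surjective (I : LieIdeal R L) : Function.Surjective (lieQuotMk I) :=
  LieSubmodule.Quotient.surjective_mk' I

lemma lieQuotMk_ker (I : LieIdeal R L) : (lieQuotMk I).ker = I := by
  ext x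
  rw [LieHom.mem_ker]
  exact LieSubmodule.Quotient.mk_eq_zero'

lemma lieQuotMk_map_top (I : LieIdeal R L) :
    LieIdeal.map (lieQuotMk I) ⊤ = ⊤ := by
  rw [← (lieQuotMk I).idealRange_eq_map]
  exact (lieQuotMk I).idealRange_eq_top_of_surjective (lieQuotMk_surjective I)

lemma lieQuotMk_map_derivedSeriesOfIdeal (I : LieIdeal R L) (P : LieIdeal R L) (k : ℕ) :
    LieIdeal.map (lieQuotMk I) (derivedSeriesOfIdeal R L k P)
      = derivedSeriesOfIdeal R (L ⧸ I) k (LieIdeal.map (lieQuotMk I) P) := by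
  induction k with
  | zero => simp
  | succ k ih =>
    rw [derivedSeriesOfIdeal_succ, derivedSeriesOfIdeal_succ,
      LieIdeal.map_bracket_eq _ (lieQuotMk_surjective I), ih]

end Aux

/-- For a finite-dimensional complex Lie algebra `g` with solvable
radical `r`, the solvable radical of `g/⁅g, r⁆` equals the center of `g/⁅g, r⁆`
(so `g/⁅g, r⁆` is reductive). -/
theorem statement14 (g : Type*) [LieRing g] [LieAlgebra ℂ g] [FiniteDimensional ℂ g] :
    LieAlgebra.radical ℂ (g ⧸ ⁅(⊤ : LieIdeal ℂ g), LieAlgebra.radical ℂ g⁆)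
      = LieAlgebra.center ℂ (g ⧸ ⁅(⊤ : LieIdeal ℂ g), LieAlgebra.radical ℂ g⁆) := by
  set r := LieAlgebra.radical ℂ g with hr
  set J : LieIdeal ℂ g := ⁅(⊤ : LieIdeal ℂ g), r⁆ with hJ
  set π := lieQuotMk J with hπ
  have hsurj : Function.Surjective π := lieQuotMk_surjective J
  have hker : π.ker = J := lieQuotMk_ker J
  have hJr : J ≤ r := LieSubmodule.lie_le_right r ⊤
  refine le_antisymm ?_ (center_le_radical ℂ _)
  have key : LieAlgebra.radical ℂ (g ⧸ J) ≤ LieIdeal.map π r := by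
    set Q := LieAlgebra.radical ℂ (g ⧸ J) with hQ
    set P := LieIdeal.comap π Q with hP
    have hmapP : LieIdeal.map π P = Q := by
      rw [hP, LieIdeal.map_comap_eq (π.isIdealMorphism_of_surjective hsurj),
        π.idealRange_eq_top_of_surjective hsurj, top_inf_eq]
    obtain ⟨k, hk⟩ := LieAlgebra.IsSolvable.solvable ℂ Q
    rw [LieIdeal.derivedSeries_eq_bot_iff] at hk
    have h1 : derivedSeriesOfIdeal ℂ g k P ≤ r := by
      have hb : LieIdeal.map π (derivedSeriesOfIdeal ℂ g k P) = ⊥ := by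
        rw [lieQuotMk_map_derivedSeriesOfIdeal, ← hπ, hmapP, hk]
      have := LieIdeal.map_eq_bot_iff.mp hb
      rw [hker] at this
      exact this.trans hJr
    obtain ⟨l, hl⟩ := LieAlgebra.IsSolvable.solvable ℂ r
    rw [LieIdeal.derivedSeries_eq_bot_iff] at hl
    have hPsolv : LieAlgebra.IsSolvable P := by
      refine (LieAlgebra.isSolvable_iff ℂ P).mpr ⟨l + k, ?_⟩
      rw [LieIdeal.derivedSeries_eq_bot_iff, derivedSeriesOfIdeal_add, ← le_bot_iff, ← hl]
      exact derivedSeriesOfIdeal_mono h1 l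
    have hPle : P ≤ r := (LieIdeal.solvable_iff_le_radical ℂ g P).mp hPsolv
    calc Q = LieIdeal.map π P := hmapP.symm
      _ ≤ LieIdeal.map π r := LieIdeal.map_mono hPle
  refine key.trans ?_
  have hb : ⁅(⊤ : LieIdeal ℂ (g ⧸ J)), LieIdeal.map π r⁆ = ⊥ := by
    have h0 : LieIdeal.map π ⁅(⊤ : LieIdeal ℂ g), r⁆ = ⊥ := by
      rw [LieIdeal.map_eq_bot_iff, hker]
    rw [LieIdeal.map_bracket_eq _ hsurj, lieQuotMk_map_top] at h0
    exact h0
  intro x hx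
  rw [LieSubmodule.lie_eq_bot_iff] at hb
  exact fun y => hb y (LieSubmodule.mem_top y) x hx
end
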